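/- arXiv:2508.21543 — 2 statements merged into one kernel-verified Lean document; each statement's English description precedes it below -/
import Mathlib

section
/- Let (X, Σ, μ) and (Y, Γ, ν) be strictly localizable measure spaces, T : L¹(X, μ) → L¹(Y, ν) a bounded operator, and Θ ⊆ Y a measurable set of finite measure. Then α_Θ(T) ≤ ‖T‖_{w,Θ}, where α_Θ(T) = limsup_{ν(B)→0, B⊆Θ} ‖χ_{Y∖Θ}T + χ_B T‖ and ‖T‖_{w,Θ} is the infimum of ‖T − W‖ over all weakly compact operators W : L¹(X, μ) → L¹(Y, ν) whose range is contained in L¹(Θ). -/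
open MeasureTheory

/-- A measure space is *strictly localizable* if it decomposes into a partition of
measurable sets of finite measure which determines measurability and measure. -/
def StrictlyLocalizable {Y : Type*} [MeasurableSpace Y] (ν : Measure Y) : Prop :=
  ∃ (ι : Type) (Y' : ι → Set Y),
    Pairwise (Function.onFun Disjoint Y') ∧
    (⋃ i, Y' i) = Set.univ ∧
    (∀ i, MeasurableSet (Y' i) ∧ ν (Y' i) < ⊤) ∧
    (∀ A : Set Y, (∀ i, MeasurableSet (A ∩ Y' i)) → MeasurableSet A) ∧
    (∀ A : Set Y, MeasurableSet A → ν A = ∑' i, ν (A ∩ Y' i))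

/-- An operator between normed spaces is weakly compact if the image of the closed unit
ball is contained in a weakly compact set. -/
def IsWeaklyCompactOperator {E F : Type*} [NormedAddCommGroup E] [NormedSpace ℝ E]
    [NormedAddCommGroup F] [NormedSpace ℝ F] (T : E →L[ℝ] F) : Prop :=
  ∃ C : Set (WeakSpace ℝ F), IsCompact C ∧
    ∀ x ∈ Metric.closedBall (0 : E) 1, toWeakSpace ℝ F (T x) ∈ C

/-- The norm of `χ_S ∘ T`, i.e. the supremum over the unit ball of the `L¹`-norm of `T f`
restricted to the measurable set `S`. -/
noncomputable def opNormOn {X Y : Type*} [MeasurableSpace X] [MeasurableSpace Y]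
    {μ : Measure X} {ν : Measure Y} (T : Lp ℝ 1 μ →L[ℝ] Lp ℝ 1 ν) (S : Set Y) : ℝ :=
  sSup {r : ℝ | ∃ f : Lp ℝ 1 μ, ‖f‖ ≤ 1 ∧ r = ∫ y in S, |(T f : Y → ℝ) y| ∂ν}

/-- The localized measure of weak noncompactness
`α_Θ(T) = limsup_{ν(B) → 0, B ⊆ Θ} ‖χ_{Y∖Θ} T + χ_B T‖`, expressed as an infimum over
`δ > 0` of suprema over measurable `B ⊆ Θ` with `ν B < δ`. -/
noncomputable def alphaTheta {X Y : Type*} [MeasurableSpace X] [MeasurableSpace Y]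
    {μ : Measure X} {ν : Measure Y} (T : Lp ℝ 1 μ →L[ℝ] Lp ℝ 1 ν) (Θ : Set Y) : ℝ :=
  sInf {r : ℝ | ∃ δ : ℝ, 0 < δ ∧
    r = sSup {s : ℝ | ∃ B : Set Y, B ⊆ Θ ∧ MeasurableSet B ∧ ν B < ENNReal.ofReal δ ∧
      s = opNormOn T (Θᶜ ∪ B)}}

/-- The distance from `T` to the weakly compact operators whose range is (a.e.) supported
in `Θ`. -/
noncomputable def weakEssNormOn {X Y : Type*} [MeasurableSpace X] [MeasurableSpace Y]
    {μ : Measure X} {ν : Measure Y} (T : Lp ℝ 1 μ →L[ℝ] Lp ℝ 1 ν) (Θ : Set Y) : ℝ :=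
  sInf {r : ℝ | ∃ W : Lp ℝ 1 μ →L[ℝ] Lp ℝ 1 ν, IsWeaklyCompactOperator W ∧
    (∀ f : Lp ℝ 1 μ, ∀ᵐ y ∂ν, y ∉ Θ → (W f : Y → ℝ) y = 0) ∧ r = ‖T - W‖}


open MeasureTheory Filter Topology
open scoped ENNReal NNReal Classical
set_option linter.unusedSectionVars false
set_option linter.unusedVariables false
set_option maxHeartbeats 2000000

namespace AlphaAux

variable {Y : Type*} [MeasurableSpace Y] {ν : Measure Y}

lemma setIntegral_abs_le_norm (f : Lp ℝ 1 ν) (S : Set Y) :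
    ∫ y in S, |f y| ∂ν ≤ ‖f‖ := by
  rw [L1.norm_eq_integral_norm]
  simp_rw [← Real.norm_eq_abs]
  exact setIntegral_le_integral (L1.integrable_coeFn f).norm
    (Filter.Eventually.of_forall fun y => norm_nonneg _)

lemma absCont (g : Lp ℝ 1 ν) {η : ℝ} (hη : 0 < η) :
    ∃ d : ℝ, 0 < d ∧ ∀ S : Set Y, MeasurableSet S → ν S < ENNReal.ofReal d →
      ∫ y in S, |g y| ∂ν < η := by
  obtain ⟨δ, hδ, hprop⟩ := (Lp.memLp g).eLpNorm_indicator_le (le_refl (1 : ℝ≥0∞))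
    ENNReal.one_ne_top (half_pos hη)
  refine ⟨δ, hδ, fun S hS hνS => ?_⟩
  have h1 : ∫ y in S, |g y| ∂ν = (∫⁻ y in S, ‖g y‖ₑ ∂ν).toReal := by
    simp_rw [← Real.norm_eq_abs]
    exact integral_norm_eq_lintegral_enorm ((Lp.aestronglyMeasurable g).restrict)
  have h2 := hprop S hS hνS.le
  rw [eLpNorm_indicator_eq_eLpNorm_restrict hS, eLpNorm_one_eq_lintegral_enorm] at h2
  rw [h1]
  calc (∫⁻ y in S, ‖g y‖ₑ ∂ν).toReal ≤ (ENNReal.ofReal (η / 2)).toReal :=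
        ENNReal.toReal_mono ENNReal.ofReal_ne_top h2
    _ ≤ η / 2 := by rw [ENNReal.toReal_ofReal (by linarith : (0:ℝ) ≤ η/2)]
    _ < η := by linarith

lemma integrable_mul (u : Y → ℝ) (hu : Measurable u) (hb : ∀ y, |u y| ≤ 1)
    (f : Lp ℝ 1 ν) : Integrable (fun y => u y * f y) ν :=
  (L1.integrable_coeFn f).bdd_mul hu.aestronglyMeasurable
    (c := 1) (Filter.Eventually.of_forall fun y => by simpa [Real.norm_eq_abs] using hb y)

/-- Integration against a bounded measurable function, as a continuous linear
functional on `L¹`. -/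
noncomputable def intCLM (ν : Measure Y) (u : Y → ℝ) (hu : Measurable u)
    (hb : ∀ y, |u y| ≤ 1) : Lp ℝ 1 ν →L[ℝ] ℝ :=
  LinearMap.mkContinuous
    { toFun := fun f => ∫ y, u y * f y ∂ν
      map_add' := fun f g => by
        show (∫ y, u y * (↑(f + g) : Y → ℝ) y ∂ν)
          = (∫ y, u y * f y ∂ν) + ∫ y, u y * g y ∂ν
        have h1 : ∫ y, u y * (↑(f + g) : Y → ℝ) y ∂ν = ∫ y, u y * (f y + g y) ∂ν := by
          refine integral_congr_ae ?_
          filter_upwards [Lp.coeFn_add f g] with y hy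
          rw [hy]; rfl
        rw [h1]
        simp_rw [mul_add]
        exact integral_add (integrable_mul u hu hb f) (integrable_mul u hu hb g)
      map_smul' := fun c f => by
        show (∫ y, u y * (↑(c • f) : Y → ℝ) y ∂ν) = c • ∫ y, u y * f y ∂ν
        have h1 : ∫ y, u y * (↑(c • f) : Y → ℝ) y ∂ν = ∫ y, c * (u y * f y) ∂ν := by
          refine integral_congr_ae ?_
          filter_upwards [Lp.coeFn_smul c f] with y hy
          rw [hy]; simp [smul_eq_mul]; ring
        rw [h1, integral_const_mul]
        rfl }
    1
    (fun f => by
      simp only [LinearMap.coe_mk, AddHom.coe_mk, one_mul]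
      calc ‖∫ y, u y * f y ∂ν‖ ≤ ∫ y, ‖u y * f y‖ ∂ν := norm_integral_le_integral_norm _
        _ ≤ ∫ y, ‖f y‖ ∂ν := by
            refine integral_mono (integrable_mul u hu hb f).norm
              (L1.integrable_coeFn f).norm fun y => ?_
            simp only [norm_mul, Real.norm_eq_abs]
            calc |u y| * |f y| ≤ 1 * |f y| :=
              mul_le_mul_of_nonneg_right (hb y) (abs_nonneg _)
              _ = |f y| := one_mul _
        _ = ‖f‖ := (L1.norm_eq_integral_norm f).symm)

lemma intCLM_apply (u : Y → ℝ) (hu : Measurable u) (hb : ∀ y, |u y| ≤ 1) (f : Lp ℝ 1 ν) :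
    intCLM ν u hu hb f = ∫ y, u y * f y ∂ν := rfl

lemma intCLM_diff_le {u v : Y → ℝ} (hu : Measurable u) (hv : Measurable v)
    (hbu : ∀ y, |u y| ≤ 1) (hbv : ∀ y, |v y| ≤ 1) {S : Set Y} (hS : MeasurableSet S)
    (h : ∀ y, |u y - v y| ≤ S.indicator 1 y) (f : Lp ℝ 1 ν) :
    |intCLM ν u hu hbu f - intCLM ν v hv hbv f| ≤ ∫ y in S, |f y| ∂ν := by
  rw [intCLM_apply, intCLM_apply,
    ← integral_sub (integrable_mul u hu hbu f) (integrable_mul v hv hbv f)]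
  have habs : Integrable (fun y => |f y|) ν := (L1.integrable_coeFn f).abs
  calc |∫ y, (u y * f y - v y * f y) ∂ν| ≤ ∫ y, |u y * f y - v y * f y| ∂ν := by
        simpa [Real.norm_eq_abs] using norm_integral_le_integral_norm
          (fun y => u y * f y - v y * f y)
    _ ≤ ∫ y, S.indicator (fun z => |f z|) y ∂ν := by
        refine integral_mono ((integrable_mul u hu hbu f).sub
          (integrable_mul v hv hbv f)).abs (habs.indicator hS) fun y => ?_
        rw [← sub_mul, abs_mul]
        by_cases hy : y ∈ S
        · rw [Set.indicator_of_mem hy]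
          calc |u y - v y| * |f y| ≤ 1 * |f y| := by
                refine mul_le_mul_of_nonneg_right ?_ (abs_nonneg _)
                simpa [Set.indicator_of_mem hy] using h y
            _ = |f y| := one_mul _
        · rw [Set.indicator_of_notMem hy]
          have := h y
          rw [Set.indicator_of_notMem hy] at this
          have h0 : |u y - v y| = 0 := le_antisymm this (abs_nonneg _)
          rw [h0, zero_mul]
    _ = ∫ y in S, |f y| ∂ν := integral_indicator hS




/-- `±1`-valued function: `+1` on sets `A j` with `j ∈ J ∩ P`, `-1` on `A j` with
`j ∈ J \ P`, `0` elsewhere. -/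
noncomputable def signedU (A : ℕ → Set Y) (P J : Set ℕ) : Y → ℝ :=
  fun y => (⋃ j ∈ J ∩ P, A j).indicator 1 y - (⋃ j ∈ J \ P, A j).indicator 1 y

lemma measurable_signedU {A : ℕ → Set Y} (hA : ∀ j, MeasurableSet (A j))
    (P J : Set ℕ) : Measurable (signedU A P J) := by
  refine Measurable.sub ?_ ?_ <;>
  exact (measurable_one).indicator (MeasurableSet.biUnion (Set.to_countable _)
    fun j _ => hA j)

lemma signedU_eq_zero {A : ℕ → Set Y} {P J : Set ℕ} {y : Y}
    (hy : ∀ j, y ∉ A j) : signedU A P J y = 0 := by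
  unfold signedU
  rw [Set.indicator_of_notMem, Set.indicator_of_notMem, sub_zero]
  · rintro hmem
    obtain ⟨j, -, hj⟩ := Set.mem_iUnion₂.1 hmem
    exact hy j hj
  · rintro hmem
    obtain ⟨j, -, hj⟩ := Set.mem_iUnion₂.1 hmem
    exact hy j hj

lemma signedU_eq_of_mem {A : ℕ → Set Y} (hd : Pairwise (Function.onFun Disjoint A))
    {P J : Set ℕ} {j : ℕ} {y : Y} (hy : y ∈ A j) :
    signedU A P J y = if j ∈ J then (if j ∈ P then (1 : ℝ) else -1) else 0 := by
  have huniq : ∀ i : ℕ, y ∈ A i → i = j := fun i hi => by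
    by_contra hne
    exact (hd hne).le_bot ⟨hi, hy⟩
  have hpos : (⋃ i ∈ J ∩ P, A i).indicator (1 : Y → ℝ) y
      = if j ∈ J ∩ P then 1 else 0 := by
    by_cases h : j ∈ J ∩ P
    · rw [if_pos h, Set.indicator_of_mem (Set.mem_biUnion h hy)]; rfl
    · rw [if_neg h, Set.indicator_of_notMem]
      rintro hmem
      obtain ⟨i, hi, hyi⟩ := Set.mem_iUnion₂.1 hmem
      exact h ((huniq i hyi) ▸ hi)
  have hneg : (⋃ i ∈ J \ P, A i).indicator (1 : Y → ℝ) y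
      = if j ∈ J \ P then 1 else 0 := by
    by_cases h : j ∈ J \ P
    · rw [if_pos h, Set.indicator_of_mem (Set.mem_biUnion h hy)]; rfl
    · rw [if_neg h, Set.indicator_of_notMem]
      rintro hmem
      obtain ⟨i, hi, hyi⟩ := Set.mem_iUnion₂.1 hmem
      exact h ((huniq i hyi) ▸ hi)
  unfold signedU
  rw [hpos, hneg]
  by_cases hJ : j ∈ J <;> by_cases hP : j ∈ P <;>
    simp [hJ, hP, Set.mem_inter_iff, Set.mem_diff]

lemma abs_signedU_le_one {A : ℕ → Set Y} (hd : Pairwise (Function.onFun Disjoint A))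
    (P J : Set ℕ) (y : Y) : |signedU A P J y| ≤ 1 := by
  by_cases hy : ∃ j, y ∈ A j
  · obtain ⟨j, hj⟩ := hy
    rw [signedU_eq_of_mem hd hj]
    by_cases hJ : j ∈ J <;> by_cases hP : j ∈ P <;> simp [hJ, hP]
  · push_neg at hy
    rw [signedU_eq_zero hy]
    norm_num

lemma signedU_diff_le {A : ℕ → Set Y} (hd : Pairwise (Function.onFun Disjoint A))
    {P J J' : Set ℕ} (hJJ : J' ⊆ J) {S : Set Y}
    (hUS : (⋃ j ∈ J \ J', A j) ⊆ S) (y : Y) :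
    |signedU A P J y - signedU A P J' y| ≤ S.indicator 1 y := by
  by_cases hy : ∃ j, y ∈ A j
  · obtain ⟨j, hj⟩ := hy
    rw [signedU_eq_of_mem hd hj, signedU_eq_of_mem hd hj]
    by_cases hJ' : j ∈ J'
    · rw [if_pos (hJJ hJ'), if_pos hJ', sub_self, abs_zero]
      exact Set.indicator_apply_nonneg fun _ => zero_le_one
    · rw [if_neg hJ', sub_zero]
      by_cases hJ : j ∈ J
      · have hyS : y ∈ S := hUS (Set.mem_biUnion ⟨hJ, hJ'⟩ hj)
        rw [Set.indicator_of_mem hyS]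
        by_cases hP : j ∈ P <;> simp [hJ, hP]
      · rw [if_neg hJ, abs_zero]
        exact Set.indicator_apply_nonneg fun _ => zero_le_one
  · push_neg at hy
    rw [signedU_eq_zero hy, signedU_eq_zero hy, sub_self, abs_zero]
    exact Set.indicator_apply_nonneg fun _ => zero_le_one

lemma signedU_window {A : ℕ → Set Y} (hd : Pairwise (Function.onFun Disjoint A))
    (P : Set ℕ) {K k : ℕ} (hKk : K ≤ k) (y : Y) :
    signedU A P {j | j ≤ k} y - signedU A P {j | j ≤ K} y
      = ∑ j ∈ Finset.Ioc K k,
          (A j).indicator (fun _ => if j ∈ P then (1 : ℝ) else -1) y := by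
  by_cases hy : ∃ j, y ∈ A j
  · obtain ⟨j₀, hj₀⟩ := hy
    have huniq : ∀ i : ℕ, y ∈ A i → i = j₀ := fun i hi => by
      by_contra hne
      exact (hd hne).le_bot ⟨hi, hj₀⟩
    rw [signedU_eq_of_mem hd hj₀, signedU_eq_of_mem hd hj₀]
    simp only [Set.mem_setOf_eq]
    by_cases hmem : j₀ ∈ Finset.Ioc K k
    · rw [Finset.sum_eq_single_of_mem j₀ hmem (fun i _ hne => by
        rw [Set.indicator_of_notMem (fun hyi => hne (huniq i hyi))])]
      rw [Set.indicator_of_mem hj₀]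
      obtain ⟨h1, h2⟩ := Finset.mem_Ioc.1 hmem
      rw [if_pos h2, if_neg (not_le.mpr h1), sub_zero]
    · rw [Finset.sum_eq_zero (fun i hi => by
        rw [Set.indicator_of_notMem (fun hyi => hmem ((huniq i hyi) ▸ hi))])]
      rw [Finset.mem_Ioc, not_and_or, not_lt, not_le] at hmem
      rcases hmem with h | h
      · rw [if_pos (le_trans h hKk : j₀ ≤ k), if_pos h, sub_self]
      · rw [if_neg (not_le.mpr h), if_neg (not_le.mpr (lt_of_le_of_lt hKk h)), sub_self]
  · push_neg at hy
    rw [signedU_eq_zero hy, signedU_eq_zero hy, sub_self]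
    rw [Finset.sum_eq_zero (fun i _ => Set.indicator_of_notMem (hy i) _)]



noncomputable def indCLM (ν : Measure Y) (A : Set Y) (hA : MeasurableSet A) :
    Lp ℝ 1 ν →L[ℝ] ℝ :=
  intCLM ν (A.indicator 1) (measurable_one.indicator hA)
    (fun y => by
      by_cases hy : y ∈ A
      · rw [Set.indicator_of_mem hy]; norm_num
      · rw [Set.indicator_of_notMem hy]; norm_num)

lemma indCLM_apply (A : Set Y) (hA : MeasurableSet A) (f : Lp ℝ 1 ν) :
    indCLM ν A hA f = ∫ y in A, f y ∂ν := by
  rw [indCLM, intCLM_apply, ← integral_indicator hA]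
  refine integral_congr_ae (Filter.Eventually.of_forall fun y => ?_)
  show A.indicator 1 y * f y = A.indicator (fun z => f z) y
  by_cases hy : y ∈ A
  · rw [Set.indicator_of_mem hy, Set.indicator_of_mem hy, Pi.one_apply, one_mul]
  · rw [Set.indicator_of_notMem hy, Set.indicator_of_notMem hy, zero_mul]

noncomputable def sgnCLM (ν : Measure Y) {A : ℕ → Set Y} (hA : ∀ j, MeasurableSet (A j))
    (hd : Pairwise (Function.onFun Disjoint A)) (P J : Set ℕ) : Lp ℝ 1 ν →L[ℝ] ℝ :=
  intCLM ν (signedU A P J) (measurable_signedU hA P J) (abs_signedU_le_one hd P J)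

lemma sgnCLM_diff_le {A : ℕ → Set Y} (hA : ∀ j, MeasurableSet (A j))
    (hd : Pairwise (Function.onFun Disjoint A)) (P : Set ℕ) {J J' : Set ℕ}
    (hJJ : J' ⊆ J) {S : Set Y} (hS : MeasurableSet S)
    (hUS : (⋃ j ∈ J \ J', A j) ⊆ S) (f : Lp ℝ 1 ν) :
    |sgnCLM ν hA hd P J f - sgnCLM ν hA hd P J' f| ≤ ∫ y in S, |f y| ∂ν :=
  intCLM_diff_le _ _ _ _ hS (fun y => signedU_diff_le hd hJJ hUS y) f

lemma sgnCLM_window {A : ℕ → Set Y} (hA : ∀ j, MeasurableSet (A j))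
    (hd : Pairwise (Function.onFun Disjoint A)) (P : Set ℕ) {K k : ℕ} (hKk : K ≤ k)
    (f : Lp ℝ 1 ν) :
    sgnCLM ν hA hd P {j | j ≤ k} f - sgnCLM ν hA hd P {j | j ≤ K} f
      = ∑ j ∈ Finset.Ioc K k,
          (if j ∈ P then (1 : ℝ) else -1) * ∫ y in A j, f y ∂ν := by
  rw [sgnCLM, sgnCLM, intCLM_apply, intCLM_apply,
    ← integral_sub (integrable_mul _ (measurable_signedU hA P _) (abs_signedU_le_one hd P _) f)
      (integrable_mul _ (measurable_signedU hA P _) (abs_signedU_le_one hd P _) f)]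
  have hpt : ∀ y, signedU A P {j | j ≤ k} y * f y - signedU A P {j | j ≤ K} y * f y
      = ∑ j ∈ Finset.Ioc K k,
          (A j).indicator (fun z => (if j ∈ P then (1 : ℝ) else -1) * f z) y := by
    intro y
    rw [← sub_mul, signedU_window hd P hKk y, Finset.sum_mul]
    refine Finset.sum_congr rfl fun j _ => ?_
    by_cases hy : y ∈ A j
    · rw [Set.indicator_of_mem hy, Set.indicator_of_mem hy]
    · rw [Set.indicator_of_notMem hy, Set.indicator_of_notMem hy, zero_mul]
  rw [integral_congr_ae (Filter.Eventually.of_forall hpt)]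
  rw [integral_finset_sum _ (fun j _ =>
    (((L1.integrable_coeFn f).const_mul _).indicator (hA j)))]
  refine Finset.sum_congr rfl fun j _ => ?_
  rw [integral_indicator (hA j), integral_const_mul]

lemma cluster_aux {F : Type*} [NormedAddCommGroup F] [NormedSpace ℝ F]
    {x : WeakSpace ℝ F} {s : ℕ → F}
    (hx : MapClusterPt x atTop (fun n => toWeakSpace ℝ F (s n)))
    (Φ : Finset (F →L[ℝ] ℝ)) {r : ℝ} (hr : 0 < r) (N : ℕ) :
    ∃ n ≥ N, ∀ ψ ∈ Φ, |ψ (s n) - ψ ((toWeakSpace ℝ F).symm x)| < r := by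
  have hcont : ∀ ψ : F →L[ℝ] ℝ, Continuous fun z : WeakSpace ℝ F =>
      ψ ((toWeakSpace ℝ F).symm z) := by
    intro ψ
    exact WeakBilin.eval_continuous ((topDualPairing ℝ F).flip) ψ
  have hU : {z : WeakSpace ℝ F | ∀ ψ ∈ Φ,
      |ψ ((toWeakSpace ℝ F).symm z) - ψ ((toWeakSpace ℝ F).symm x)| < r} ∈ 𝓝 x := by
    have : IsOpen {z : WeakSpace ℝ F | ∀ ψ ∈ Φ,
        |ψ ((toWeakSpace ℝ F).symm z) - ψ ((toWeakSpace ℝ F).symm x)| < r} := by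
      have : {z : WeakSpace ℝ F | ∀ ψ ∈ Φ,
          |ψ ((toWeakSpace ℝ F).symm z) - ψ ((toWeakSpace ℝ F).symm x)| < r}
          = ⋂ ψ ∈ Φ, {z : WeakSpace ℝ F |
            |ψ ((toWeakSpace ℝ F).symm z) - ψ ((toWeakSpace ℝ F).symm x)| < r} := by
        ext z; simp
      rw [this]
      refine isOpen_biInter_finset fun ψ _ => ?_
      have hc : Continuous fun z : WeakSpace ℝ F =>
          |ψ ((toWeakSpace ℝ F).symm z) - ψ ((toWeakSpace ℝ F).symm x)| :=
        ((hcont ψ).sub continuous_const).abs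
      exact isOpen_lt hc continuous_const
    refine this.mem_nhds ?_
    show ∀ ψ ∈ Φ, _
    intro ψ hψ
    simpa using hr
  have hfreq := (mapClusterPt_iff_frequently.1 hx) _ hU
  obtain ⟨n, hnN, hn⟩ := (Filter.frequently_atTop.1 hfreq) N
  refine ⟨n, hnN, fun ψ hψ => ?_⟩
  have := hn ψ hψ
  rwa [LinearEquiv.symm_apply_apply] at this


lemma abs_setIntegral_le (f : Y → ℝ) (S : Set Y) :
    |∫ y in S, f y ∂ν| ≤ ∫ y in S, |f y| ∂ν := by
  simpa [Real.norm_eq_abs] using norm_integral_le_integral_norm (μ := ν.restrict S) f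

lemma geom_aux {a : ℝ} (ha : 0 ≤ a) :
    ∑' k : ℕ, ENNReal.ofReal (a * (1/2)^k) = ENNReal.ofReal a * 2 := by
  have h : ∀ k : ℕ, ENNReal.ofReal (a * (1/2)^k)
      = ENNReal.ofReal a * (ENNReal.ofReal (1/2))^k := by
    intro k
    rw [ENNReal.ofReal_mul ha, ENNReal.ofReal_pow (by norm_num)]
  simp_rw [h]
  rw [ENNReal.tsum_mul_left, ENNReal.tsum_geometric]
  congr 1
  have h12 : ENNReal.ofReal (1/2) = 2⁻¹ := by
    rw [one_div, ENNReal.ofReal_inv_of_pos (by norm_num : (0:ℝ) < 2)]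
    norm_num
  rw [h12, ENNReal.one_sub_inv_two, inv_inv]

set_option maxHeartbeats 2000000 in
lemma key {X : Type*} [MeasurableSpace X] {μ : Measure X}
    (W : Lp ℝ 1 μ →L[ℝ] Lp ℝ 1 ν) (hW : IsWeaklyCompactOperator W)
    {η : ℝ} (hη : 0 < η) :
    ∃ δ : ℝ, 0 < δ ∧ ∀ B : Set Y, MeasurableSet B → ν B < ENNReal.ofReal δ →
      ∀ f : Lp ℝ 1 μ, ‖f‖ ≤ 1 → ∫ y in B, |(W f : Y → ℝ) y| ∂ν ≤ η := by
  by_contra hcon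
  push_neg at hcon
  set κ : ℝ := η/2 with hκdef
  have hκ : 0 < κ := by positivity
  have hκ8 : 0 < κ/8 := by positivity
  -- Step A: sign splitting
  have H2 : ∀ δ : ℝ, 0 < δ → ∃ B f, MeasurableSet B ∧ ν B < ENNReal.ofReal δ ∧ ‖f‖ ≤ 1 ∧
      κ < |∫ y in B, (W f : Y → ℝ) y ∂ν| := by
    intro δ hδ
    obtain ⟨B, hB, hνB, f, hf, hint⟩ := hcon δ hδ
    set g := W f with hg
    have hgm : Measurable (g : Y → ℝ) := (Lp.stronglyMeasurable g).measurable
    have hPosMeas : MeasurableSet {y | 0 ≤ (g : Y → ℝ) y} :=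
      measurableSet_le measurable_const hgm
    set Bp := B ∩ {y | 0 ≤ (g : Y → ℝ) y} with hBpdef
    set Bm := B \ {y | 0 ≤ (g : Y → ℝ) y} with hBmdef
    have hmp : MeasurableSet Bp := hB.inter hPosMeas
    have hmm : MeasurableSet Bm := hB.diff hPosMeas
    have habs : Integrable (fun y => |(g : Y → ℝ) y|) ν := (L1.integrable_coeFn g).abs
    have hdisj : Disjoint Bp Bm := Set.disjoint_left.2 fun y hy1 hy2 => hy2.2 hy1.2
    have hBeq : Bp ∪ Bm = B := Set.inter_union_diff B _
    have hsplit : ∫ y in B, |(g : Y → ℝ) y| ∂ν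
        = (∫ y in Bp, |(g : Y → ℝ) y| ∂ν) + ∫ y in Bm, |(g : Y → ℝ) y| ∂ν := by
      rw [← hBeq, setIntegral_union hdisj hmm habs.integrableOn habs.integrableOn]
    have h1 : ∫ y in Bp, |(g : Y → ℝ) y| ∂ν = ∫ y in Bp, (g : Y → ℝ) y ∂ν :=
      setIntegral_congr_fun hmp fun y hy => abs_of_nonneg hy.2
    have h2 : ∫ y in Bm, |(g : Y → ℝ) y| ∂ν = - ∫ y in Bm, (g : Y → ℝ) y ∂ν := by
      rw [← integral_neg]
      exact setIntegral_congr_fun hmm fun y hy => abs_of_neg (not_le.1 hy.2)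
    by_cases hcase : κ < |∫ y in Bp, (g : Y → ℝ) y ∂ν|
    · exact ⟨Bp, f, hmp, lt_of_le_of_lt (measure_mono Set.inter_subset_left) hνB, hf, hcase⟩
    · refine ⟨Bm, f, hmm, lt_of_le_of_lt (measure_mono Set.diff_subset) hνB, hf, ?_⟩
      push_neg at hcase
      have hup : ∫ y in B, |(g : Y → ℝ) y| ∂ν
          ≤ |∫ y in Bp, (g : Y → ℝ) y ∂ν| + |∫ y in Bm, (g : Y → ℝ) y ∂ν| := by
        rw [hsplit, h1, h2]
        have := le_abs_self (∫ y in Bp, (g : Y → ℝ) y ∂ν)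
        have := neg_le_abs (∫ y in Bm, (g : Y → ℝ) y ∂ν)
        linarith
      have : η < |∫ y in Bp, (g : Y → ℝ) y ∂ν| + |∫ y in Bm, (g : Y → ℝ) y ∂ν| :=
        lt_of_lt_of_le hint hup
      rw [hκdef] at hcase ⊢
      linarith
  -- thresholds and picking function
  have hThr := fun g : Lp ℝ 1 ν => absCont g hκ8
  set Thr : Lp ℝ 1 ν → ℝ := fun g => (hThr g).choose with hThrdef
  have hThr1 : ∀ g, 0 < Thr g := fun g => (hThr g).choose_spec.1
  have hThr2 : ∀ g S, MeasurableSet S → ν S < ENNReal.ofReal (Thr g) →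
      ∫ y in S, |(g : Y → ℝ) y| ∂ν < κ/8 := fun g => (hThr g).choose_spec.2
  set Pick : ℝ → Set Y × Lp ℝ 1 μ := fun δ =>
    if h : 0 < δ then ((H2 δ h).choose, (H2 δ h).choose_spec.choose) else (∅, 0) with hPickdef
  have hPick : ∀ δ : ℝ, 0 < δ → MeasurableSet (Pick δ).1 ∧ ν (Pick δ).1 < ENNReal.ofReal δ ∧
      ‖(Pick δ).2‖ ≤ 1 ∧ κ < |∫ y in (Pick δ).1, (W (Pick δ).2 : Y → ℝ) y ∂ν| := by
    intro δ h
    simp only [hPickdef, dif_pos h]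
    exact (H2 δ h).choose_spec.choose_spec
  -- the recursive construction
  set st : ℕ → ℝ × ℝ × Set Y × Lp ℝ 1 μ := fun n => Nat.rec
    ⟨1, Thr (W (Pick 1).2), Pick 1⟩
    (fun _ s => ⟨min s.1 s.2.1 / 4,
      min s.2.1 (Thr (W (Pick (min s.1 s.2.1 / 4)).2)), Pick (min s.1 s.2.1 / 4)⟩) n
    with hstdef
  set δs : ℕ → ℝ := fun n => (st n).1 with hδsdef
  set cs : ℕ → ℝ := fun n => (st n).2.1 with hcsdef
  set Bs : ℕ → Set Y := fun n => (st n).2.2.1 with hBsdef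
  set fs : ℕ → Lp ℝ 1 μ := fun n => (st n).2.2.2 with hfsdef
  set gs : ℕ → Lp ℝ 1 ν := fun n => W (fs n) with hgsdef
  have hδsS : ∀ n, δs (n+1) = min (δs n) (cs n) / 4 := fun n => rfl
  have hcsS : ∀ n, cs (n+1) = min (cs n) (Thr (gs (n+1))) := fun n => rfl
  have hBs : ∀ n, Bs n = (Pick (δs n)).1 := by
    intro n; cases n with
    | zero => rfl
    | succ n => rfl
  have hfs : ∀ n, fs n = (Pick (δs n)).2 := by
    intro n; cases n with
    | zero => rfl
    | succ n => rfl
  have hpos : ∀ n, 0 < δs n ∧ 0 < cs n := by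
    intro n; induction n with
    | zero => exact ⟨one_pos, hThr1 _⟩
    | succ n ih =>
      refine ⟨?_, ?_⟩
      · rw [hδsS n]; exact div_pos (lt_min ih.1 ih.2) (by norm_num)
      · rw [hcsS n]; exact lt_min ih.2 (hThr1 _)
  have hProp : ∀ n, MeasurableSet (Bs n) ∧ ν (Bs n) < ENNReal.ofReal (δs n) ∧
      ‖fs n‖ ≤ 1 ∧ κ < |∫ y in Bs n, (gs n : Y → ℝ) y ∂ν| := by
    intro n
    have h := hPick (δs n) (hpos n).1
    rw [← hBs n, ← hfs n] at h
    exact h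
  have hc_anti : ∀ {i n : ℕ}, i ≤ n → cs n ≤ cs i := by
    have hstep : ∀ n, cs (n+1) ≤ cs n := fun n => by
      rw [hcsS n]; exact min_le_left _ _
    intro i n hin
    exact antitone_nat_of_succ_le hstep hin
  have hcThr : ∀ n, cs n ≤ Thr (gs n) := by
    intro n; cases n with
    | zero => exact le_of_eq rfl
    | succ n => rw [hcsS n]; exact min_le_right _ _
  have hSmall : ∀ n i, i ≤ n → ∀ S : Set Y, MeasurableSet S →
      ν S < ENNReal.ofReal (cs n) → ∫ y in S, |(gs i : Y → ℝ) y| ∂ν < κ/8 := by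
    intro n i hin S hS hνS
    exact hThr2 (gs i) S hS (lt_of_lt_of_le hνS
      (ENNReal.ofReal_le_ofReal (le_trans (hc_anti hin) (hcThr i))))
  have hδhalf : ∀ n, δs (n+1) ≤ δs n / 2 := by
    intro n
    rw [hδsS n]
    have h1 := min_le_left (δs n) (cs n)
    have := (hpos n).1
    linarith
  have hδgeo : ∀ n k, δs (n + k) ≤ δs n * (1/2)^k := by
    intro n k
    induction k with
    | zero => simp
    | succ k ih =>
      calc δs (n + (k+1)) = δs ((n+k) + 1) := by ring_nf
        _ ≤ δs (n+k) / 2 := hδhalf _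
        _ ≤ (δs n * (1/2)^k) / 2 := by linarith
        _ = δs n * (1/2)^(k+1) := by ring
  have hδ0 : δs 0 = 1 := rfl
  have hδbound : ∀ n, δs n ≤ (1/2)^n := by
    intro n
    have := hδgeo 0 n
    rw [hδ0] at this
    simpa using this
  -- the sets E n of future Bs
  set E : ℕ → Set Y := fun n => ⋃ k, Bs (n+1+k) with hEdef
  have hEmeas : ∀ n, MeasurableSet (E n) := fun n =>
    MeasurableSet.iUnion fun k => (hProp _).1
  have hE' : ∀ n, ν (E n) ≤ ENNReal.ofReal (δs (n+1) * 2) := by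
    intro n
    calc ν (E n) ≤ ∑' k, ν (Bs (n+1+k)) := measure_iUnion_le _
      _ ≤ ∑' k, ENNReal.ofReal (δs (n+1) * (1/2)^k) := by
          refine ENNReal.tsum_le_tsum fun k => le_trans (hProp (n+1+k)).2.1.le
            (ENNReal.ofReal_le_ofReal ?_)
          exact hδgeo (n+1) k
      _ = ENNReal.ofReal (δs (n+1)) * 2 := geom_aux (hpos (n+1)).1.le
      _ = ENNReal.ofReal (δs (n+1) * 2) := by
          rw [ENNReal.ofReal_mul (hpos (n+1)).1.le]
          norm_num
  have hE : ∀ n, ν (E n) < ENNReal.ofReal (cs n) := by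
    intro n
    refine lt_of_le_of_lt (hE' n) ((ENNReal.ofReal_lt_ofReal_iff (hpos n).2).2 ?_)
    rw [hδsS n]
    have h1 := min_le_right (δs n) (cs n)
    have := (hpos n).2
    linarith
  have hBE : ∀ n m, n < m → Bs m ⊆ E n := by
    intro n m h
    have hm : m = n+1+(m-n-1) := by omega
    rw [hm]
    exact Set.subset_iUnion (fun k => Bs (n+1+k)) (m-n-1)
  -- the disjointified sets
  set A : ℕ → Set Y := fun n => Bs n \ E n with hAdef
  have hAmeas : ∀ n, MeasurableSet (A n) := fun n => ((hProp n).1).diff (hEmeas n)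
  have hAB : ∀ n, A n ⊆ Bs n := fun n => Set.diff_subset
  have hAdisj : Pairwise (Function.onFun Disjoint A) := by
    intro n m hnm
    rcases lt_or_gt_of_ne hnm with h | h
    · exact Set.disjoint_left.2 fun y hy hym => hy.2 (hBE n m h (hym.1))
    · exact Set.disjoint_left.2 fun y hy hym => hym.2 (hBE m n h (hy.1))
  have hdiag : ∀ n, 7*κ/8 < |∫ y in A n, (gs n : Y → ℝ) y ∂ν| := by
    intro n
    have habs : Integrable (fun y => (gs n : Y → ℝ) y) ν := L1.integrable_coeFn _
    have hBsplit : A n ∪ (Bs n ∩ E n) = Bs n := Set.diff_union_inter (Bs n) (E n)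
    have hdisj2 : Disjoint (A n) (Bs n ∩ E n) :=
      Set.disjoint_left.2 fun y hy hy2 => hy.2 hy2.2
    have hint := setIntegral_union (f := fun y => (gs n : Y → ℝ) y) (μ := ν) hdisj2
      (((hProp n).1).inter (hEmeas n)) habs.integrableOn habs.integrableOn
    rw [hBsplit] at hint
    have hsmall2 : |∫ y in Bs n ∩ E n, (gs n : Y → ℝ) y ∂ν| ≤ κ/8 := by
      refine le_trans (abs_setIntegral_le _ _) (hSmall n n le_rfl _
        (((hProp n).1).inter (hEmeas n))
        (lt_of_le_of_lt (measure_mono Set.inter_subset_right) (hE n))).le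
    have hbig := (hProp n).2.2.2
    rw [hint] at hbig
    have := abs_add_le (∫ y in A n, (gs n : Y → ℝ) y ∂ν)
      (∫ y in Bs n ∩ E n, (gs n : Y → ℝ) y ∂ν)
    linarith
  -- first cluster point
  obtain ⟨C, hC, hCmem⟩ := hW
  have hmemC : ∀ n, toWeakSpace ℝ (Lp ℝ 1 ν) (gs n) ∈ C := fun n =>
    hCmem (fs n) (mem_closedBall_zero_iff.2 (hProp n).2.2.1)
  have hle1 : Filter.map (fun n => toWeakSpace ℝ (Lp ℝ 1 ν) (gs n)) atTop ≤ 𝓟 C :=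
    le_principal_iff.2 (Filter.mem_map.2 (Filter.univ_mem' hmemC))
  obtain ⟨x, hxC, hx⟩ := hC.exists_mapClusterPt hle1
  set g0 : Lp ℝ 1 ν := (toWeakSpace ℝ (Lp ℝ 1 ν)).symm x with hg0def
  -- summability and decay for g0
  have hsum : Summable (fun m => ∫ y in A m, |(g0 : Y → ℝ) y| ∂ν) := by
    refine summable_of_sum_range_le (c := ‖g0‖)
      (fun m => setIntegral_nonneg (hAmeas m) fun y _ => abs_nonneg _) (fun M => ?_)
    rw [← integral_biUnion_finset (Finset.range M) (fun i _ => hAmeas i)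
      (fun i _ j _ hij => hAdisj hij) (fun i _ => ((L1.integrable_coeFn g0).abs).integrableOn)]
    exact setIntegral_abs_le_norm g0 _
  have htend0 : Filter.Tendsto (fun m => |∫ y in A m, (g0 : Y → ℝ) y ∂ν|) atTop (𝓝 0) :=
    squeeze_zero (fun m => abs_nonneg _) (fun m => abs_setIntegral_le _ _)
      hsum.tendsto_atTop_zero
  set φ : ℕ → (Lp ℝ 1 ν →L[ℝ] ℝ) := fun m => indCLM ν (A m) (hAmeas m) with hφdef
  -- choosing the subsequence
  have Hex : ∀ k p : ℕ, ∃ n, p < n ∧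
      (∀ m ≤ p, |φ m (gs n) - φ m g0| < κ/2^(k+4)) ∧
      |∫ y in A n, (g0 : Y → ℝ) y ∂ν| < κ/2^(k+4) := by
    intro k p
    have hr : 0 < κ/2^(k+4) := by positivity
    obtain ⟨N, hN⟩ := Filter.eventually_atTop.1 (htend0.eventually (gt_mem_nhds hr))
    obtain ⟨n, hn1, hn2⟩ := cluster_aux hx ((Finset.range (p+1)).image φ) hr (max (p+1) N)
    refine ⟨n, ?_, fun m hm => ?_, hN n (le_trans (le_max_right _ _) hn1)⟩
    · exact Nat.lt_of_lt_of_le (Nat.lt_succ_self p) (le_trans (le_max_left _ _) hn1)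
    · exact hn2 (φ m) (Finset.mem_image_of_mem φ (Finset.mem_range.2 (Nat.lt_succ_of_le hm)))
  set ns : ℕ → ℕ := fun k => Nat.rec (Hex 0 0).choose (fun k prev => (Hex (k+1) prev).choose) k
    with hnsdef
  have hns0 := (Hex 0 0).choose_spec
  have hnsS : ∀ k, ns k < ns (k+1) ∧
      (∀ m ≤ ns k, |φ m (gs (ns (k+1))) - φ m g0| < κ/2^((k+1)+4)) ∧
      |∫ y in A (ns (k+1)), (g0 : Y → ℝ) y ∂ν| < κ/2^((k+1)+4) := fun k =>
    (Hex (k+1) (ns k)).choose_spec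
  have hmono : StrictMono ns := strictMono_nat_of_lt_succ fun k => (hnsS k).1
  have hg0small : ∀ k, |∫ y in A (ns k), (g0 : Y → ℝ) y ∂ν| < κ/2^(k+4) := by
    intro k; cases k with
    | zero => exact hns0.2.2
    | succ k => exact (hnsS k).2.2
  have hcross : ∀ j k, j < k →
      |∫ y in A (ns j), (gs (ns k) : Y → ℝ) y ∂ν| < κ/2^(j+4) + κ/2^(k+4) := by
    intro j k hjk
    obtain ⟨k', rfl⟩ : ∃ k', k = k'+1 := ⟨k-1, by omega⟩
    have h1 := (hnsS k').2.1 (ns j) (hmono.le_iff_le.2 (by omega))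
    have h2 := hg0small j
    rw [hφdef] at h1
    simp only [indCLM_apply] at h1
    have habs : |∫ y in A (ns j), (gs (ns (k'+1)) : Y → ℝ) y ∂ν|
        ≤ |∫ y in A (ns j), (gs (ns (k'+1)) : Y → ℝ) y ∂ν
            - ∫ y in A (ns j), (g0 : Y → ℝ) y ∂ν|
          + |∫ y in A (ns j), (g0 : Y → ℝ) y ∂ν| := by
      have := abs_sub_abs_le_abs_sub (∫ y in A (ns j), (gs (ns (k'+1)) : Y → ℝ) y ∂ν)
        (∫ y in A (ns j), (g0 : Y → ℝ) y ∂ν)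
      have := abs_abs_sub_abs_le_abs_sub (∫ y in A (ns j), (gs (ns (k'+1)) : Y → ℝ) y ∂ν)
        (∫ y in A (ns j), (g0 : Y → ℝ) y ∂ν)
      linarith [abs_nonneg (∫ y in A (ns j), (g0 : Y → ℝ) y ∂ν)]
    linarith
  -- the signed functionals on the subsequence
  set A' : ℕ → Set Y := fun j => A (ns j) with hA'def
  have hA'meas : ∀ j, MeasurableSet (A' j) := fun j => hAmeas (ns j)
  have hA'disj : Pairwise (Function.onFun Disjoint A') := fun i j hij =>
    hAdisj (hmono.injective.ne hij)
  set P : Set ℕ := {j | 0 ≤ ∫ y in A' j, (gs (ns j) : Y → ℝ) y ∂ν} with hPdef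
  set Ψ : Set ℕ → (Lp ℝ 1 ν →L[ℝ] ℝ) := fun J => sgnCLM ν hA'meas hA'disj P J with hΨdef
  have hUsub : ∀ K : ℕ, (⋃ j ∈ Set.univ \ {j : ℕ | j ≤ K}, A' j) ⊆ E (ns K) := by
    intro K
    refine Set.iUnion₂_subset fun j hj => ?_
    have hjk : K < j := by
      have := hj.2
      simpa using this
    exact (hAB (ns j)).trans (hBE (ns K) (ns j) (hmono hjk))
  -- main window estimate
  have hwin : ∀ K k : ℕ, K < k →
      9*κ/16 < Ψ Set.univ (gs (ns k)) - Ψ {j | j ≤ K} (gs (ns k)) := by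
    intro K k hKk
    have htail : |Ψ Set.univ (gs (ns k)) - Ψ {j | j ≤ k} (gs (ns k))|
        ≤ ∫ y in E (ns k), |(gs (ns k) : Y → ℝ) y| ∂ν := by
      refine sgnCLM_diff_le hA'meas hA'disj P (Set.subset_univ _) (hEmeas (ns k))
        (hUsub k) (gs (ns k))
    have htail2 : ∫ y in E (ns k), |(gs (ns k) : Y → ℝ) y| ∂ν < κ/8 :=
      hSmall (ns k) (ns k) le_rfl _ (hEmeas _) (hE _)
    have hwin2 : Ψ {j | j ≤ k} (gs (ns k)) - Ψ {j | j ≤ K} (gs (ns k))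
        = ∑ j ∈ Finset.Ioc K k,
            (if j ∈ P then (1:ℝ) else -1) * ∫ y in A' j, (gs (ns k) : Y → ℝ) y ∂ν :=
      sgnCLM_window hA'meas hA'disj P hKk.le (gs (ns k))
    have hdiagterm : (if k ∈ P then (1:ℝ) else -1)
        * ∫ y in A' k, (gs (ns k) : Y → ℝ) y ∂ν
        = |∫ y in A' k, (gs (ns k) : Y → ℝ) y ∂ν| := by
      by_cases hk : k ∈ P
      · have hk' : 0 ≤ ∫ y in A' k, (gs (ns k) : Y → ℝ) y ∂ν := hk
        rw [if_pos hk, one_mul, abs_of_nonneg hk']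
      · have hk' : ¬ (0 ≤ ∫ y in A' k, (gs (ns k) : Y → ℝ) y ∂ν) := hk
        rw [if_neg hk, neg_one_mul, abs_of_neg (not_le.1 hk')]
    have hsum_split : ∑ j ∈ Finset.Ioc K k,
          (if j ∈ P then (1:ℝ) else -1) * ∫ y in A' j, (gs (ns k) : Y → ℝ) y ∂ν
        = (∑ j ∈ Finset.Ioo K k,
            (if j ∈ P then (1:ℝ) else -1) * ∫ y in A' j, (gs (ns k) : Y → ℝ) y ∂ν)
          + |∫ y in A' k, (gs (ns k) : Y → ℝ) y ∂ν| := by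
      rw [← hdiagterm, ← Finset.Ioc_erase_right K k,
        Finset.sum_erase_add _ _ (Finset.mem_Ioc.2 ⟨hKk, le_rfl⟩)]
    have hIoo : |∑ j ∈ Finset.Ioo K k,
          (if j ∈ P then (1:ℝ) else -1) * ∫ y in A' j, (gs (ns k) : Y → ℝ) y ∂ν|
        ≤ ∑ j ∈ Finset.Ioo K k, |∫ y in A' j, (gs (ns k) : Y → ℝ) y ∂ν| := by
      refine le_trans (Finset.abs_sum_le_sum_abs _ _) (Finset.sum_le_sum fun j _ => ?_)
      rw [abs_mul]
      have : |if j ∈ P then (1:ℝ) else -1| = 1 := by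
        by_cases hj : j ∈ P <;> simp [hj]
      rw [this, one_mul]
    have hIoo2 : ∑ j ∈ Finset.Ioo K k, |∫ y in A' j, (gs (ns k) : Y → ℝ) y ∂ν|
        ≤ 3*κ/16 := by
      have hstep1 : ∑ j ∈ Finset.Ioo K k, |∫ y in A' j, (gs (ns k) : Y → ℝ) y ∂ν|
          ≤ ∑ j ∈ Finset.Ioo K k, (κ/2^(j+4) + κ/2^(k+4)) :=
        Finset.sum_le_sum fun j hj => (hcross j k (Finset.mem_Ioo.1 hj).2).le
      have hstep2 : ∑ j ∈ Finset.Ioo K k, (κ/2^(j+4) + κ/2^(k+4))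
          ≤ (∑ j ∈ Finset.range k, κ/2^(j+4)) + k * (κ/2^(k+4)) := by
        rw [Finset.sum_add_distrib]
        refine add_le_add ?_ ?_
        · refine Finset.sum_le_sum_of_subset_of_nonneg ?_ fun j _ _ => by positivity
          intro j hj
          exact Finset.mem_range.2 (Finset.mem_Ioo.1 hj).2
        · rw [Finset.sum_const, nsmul_eq_mul]
          refine mul_le_mul_of_nonneg_right ?_ (by positivity)
          have : (Finset.Ioo K k).card ≤ k := by
            rw [Nat.card_Ioo]
            exact_mod_cast Nat.le_of_lt_succ (by omega)
          exact_mod_cast this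
      have hstep3 : (∑ j ∈ Finset.range k, κ/2^(j+4)) ≤ κ/8 := by
        have : ∑ j ∈ Finset.range k, κ/2^(j+4) = κ/16 * ∑ j ∈ Finset.range k, (1/2:ℝ)^j := by
          rw [Finset.mul_sum]
          refine Finset.sum_congr rfl fun j _ => ?_
          rw [pow_add, one_div, inv_pow]
          ring
        rw [this]
        have := sum_geometric_two_le k
        nlinarith
      have hstep4 : (k : ℝ) * (κ/2^(k+4)) ≤ κ/16 := by
        have hk2 : (k : ℝ) ≤ 2^k := by
          exact_mod_cast (Nat.lt_two_pow_self (n := k)).le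
        have h2k : (0:ℝ) < 2^k := by positivity
        have h24 : (2:ℝ)^(k+4) = 2^k * 16 := by rw [pow_add]; norm_num
        have heq : (k:ℝ) * (κ/2^(k+4)) = ((k:ℝ)/2^k) * (κ/16) := by
          rw [h24]
          ring
        rw [heq]
        have hle1 : (k:ℝ)/2^k ≤ 1 := (div_le_one h2k).2 hk2
        calc ((k:ℝ)/2^k) * (κ/16) ≤ 1 * (κ/16) :=
            mul_le_mul_of_nonneg_right hle1 (by positivity)
          _ = κ/16 := one_mul _
      linarith
    have hdiagval : 7*κ/8 < |∫ y in A' k, (gs (ns k) : Y → ℝ) y ∂ν| := hdiag (ns k)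
    have h5 := abs_le.1 htail
    have h6 := abs_le.1 hIoo
    have heq : Ψ Set.univ (gs (ns k)) - Ψ {j | j ≤ K} (gs (ns k))
        = (Ψ Set.univ (gs (ns k)) - Ψ {j | j ≤ k} (gs (ns k)))
          + (Ψ {j | j ≤ k} (gs (ns k)) - Ψ {j | j ≤ K} (gs (ns k))) := by ring
    rw [heq, hwin2, hsum_split]
    linarith [h5.1, h6.1]
  -- second cluster point, on the subsequence
  have hle2 : Filter.map (fun k => toWeakSpace ℝ (Lp ℝ 1 ν) (gs (ns k))) atTop ≤ 𝓟 C :=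
    le_principal_iff.2 (Filter.mem_map.2 (Filter.univ_mem' fun k => hmemC (ns k)))
  obtain ⟨x', hx'C, hx'⟩ := hC.exists_mapClusterPt hle2
  set h0 : Lp ℝ 1 ν := (toWeakSpace ℝ (Lp ℝ 1 ν)).symm x' with hh0def
  have hκ16 : 0 < κ/16 := by positivity
  obtain ⟨dh, hdh, hdhprop⟩ := absCont h0 hκ16
  obtain ⟨M, hM⟩ := exists_pow_lt_of_lt_one hdh (by norm_num : (1/2 : ℝ) < 1)
  have hEsmall : ν (E (ns M)) < ENNReal.ofReal dh := by
    refine lt_of_le_of_lt (hE' (ns M)) ((ENNReal.ofReal_lt_ofReal_iff hdh).2 ?_)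
    have h1 : δs (ns M + 1) ≤ (1/2)^(ns M + 1) := hδbound (ns M + 1)
    have h2 : ((1:ℝ)/2)^(ns M + 1) * 2 = (1/2)^(ns M) := by
      rw [pow_succ]
      ring
    have h3 : ((1:ℝ)/2)^(ns M) ≤ (1/2)^M :=
      pow_le_pow_of_le_one (by norm_num) (by norm_num) (hmono.le_apply)
    nlinarith [hM]
  have hheadh : |Ψ Set.univ h0 - Ψ {j | j ≤ M} h0| < κ/16 := by
    refine lt_of_le_of_lt (sgnCLM_diff_le hA'meas hA'disj P (Set.subset_univ _)
      (hEmeas (ns M)) (hUsub M) h0) (hdhprop _ (hEmeas _) hEsmall)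
  obtain ⟨k, hkM, hk⟩ := cluster_aux hx' {Ψ Set.univ, Ψ {j | j ≤ M}} hκ16 (M+1)
  have e1 := hk (Ψ Set.univ) (Finset.mem_insert_self _ _)
  have e2 := hk (Ψ {j | j ≤ M}) (by simp)
  have e3 := hwin M k (by omega)
  have a1 := abs_lt.1 e1
  have a2 := abs_lt.1 e2
  have a3 := abs_lt.1 hheadh
  linarith

end AlphaAux




section MainAux

variable {X Y : Type*} [MeasurableSpace X] [MeasurableSpace Y]
  {μ : Measure X} {ν : Measure Y}

lemma zero_mem_opSet (T : Lp ℝ 1 μ →L[ℝ] Lp ℝ 1 ν) (S : Set Y) :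
    (0:ℝ) ∈ {r : ℝ | ∃ f : Lp ℝ 1 μ, ‖f‖ ≤ 1 ∧ r = ∫ y in S, |(T f : Y → ℝ) y| ∂ν} := by
  refine ⟨0, by simp, ?_⟩
  have h0 : (T 0 : Y → ℝ) =ᵐ[ν] 0 := by
    rw [map_zero]
    exact Lp.coeFn_zero ℝ 1 ν
  have : ∫ y in S, |(T 0 : Y → ℝ) y| ∂ν = 0 := by
    refine integral_eq_zero_of_ae ?_
    filter_upwards [ae_restrict_of_ae h0] with y hy
    rw [hy, Pi.zero_apply, abs_zero]
  exact this.symm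

lemma mem_opSet_le (T : Lp ℝ 1 μ →L[ℝ] Lp ℝ 1 ν) (S : Set Y) {r : ℝ}
    (hr : r ∈ {r : ℝ | ∃ f : Lp ℝ 1 μ, ‖f‖ ≤ 1 ∧ r = ∫ y in S, |(T f : Y → ℝ) y| ∂ν}) :
    r ≤ ‖T‖ := by
  obtain ⟨f, hf, rfl⟩ := hr
  calc ∫ y in S, |(T f : Y → ℝ) y| ∂ν ≤ ‖T f‖ := AlphaAux.setIntegral_abs_le_norm (T f) S
    _ ≤ ‖T‖ * ‖f‖ := T.le_opNorm f
    _ ≤ ‖T‖ * 1 := mul_le_mul_of_nonneg_left hf (norm_nonneg T)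
    _ = ‖T‖ := mul_one _

lemma opNormOn_nonneg (T : Lp ℝ 1 μ →L[ℝ] Lp ℝ 1 ν) (S : Set Y) : 0 ≤ opNormOn T S :=
  le_csSup ⟨‖T‖, fun _ hr => mem_opSet_le T S hr⟩ (zero_mem_opSet T S)

lemma opNormOn_le_norm (T : Lp ℝ 1 μ →L[ℝ] Lp ℝ 1 ν) (S : Set Y) : opNormOn T S ≤ ‖T‖ :=
  csSup_le ⟨0, zero_mem_opSet T S⟩ fun _ hr => mem_opSet_le T S hr

end MainAux


/-- `α_Θ(T) ≤ ‖T‖_{w,Θ}` for every measurable set `Θ` of finite measure. -/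
theorem alphaTheta_le_weakEssNormOn
    {X Y : Type*} [MeasurableSpace X] [MeasurableSpace Y]
    (μ : Measure X) (ν : Measure Y)
    (hμ : StrictlyLocalizable μ) (hν : StrictlyLocalizable ν)
    (T : Lp ℝ 1 μ →L[ℝ] Lp ℝ 1 ν)
    (Θ : Set Y) (hΘ : MeasurableSet Θ) (hΘfin : ν Θ < ⊤) :
    alphaTheta T Θ ≤ weakEssNormOn T Θ := by
  classical
  -- the set defining `weakEssNormOn` is nonempty (take `W = 0`)
  have hW0 : IsWeaklyCompactOperator (0 : Lp ℝ 1 μ →L[ℝ] Lp ℝ 1 ν) := by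
    refine ⟨{0}, isCompact_singleton, fun x _ => ?_⟩
    simp only [ContinuousLinearMap.zero_apply, map_zero, Set.mem_singleton_iff]
  have hsupp0 : ∀ f : Lp ℝ 1 μ, ∀ᵐ y ∂ν, y ∉ Θ →
      ((0 : Lp ℝ 1 μ →L[ℝ] Lp ℝ 1 ν) f : Y → ℝ) y = 0 := by
    intro f
    filter_upwards [Lp.coeFn_zero ℝ 1 ν] with y hy _
    simpa [ContinuousLinearMap.zero_apply] using hy
  have hne : {r : ℝ | ∃ W : Lp ℝ 1 μ →L[ℝ] Lp ℝ 1 ν, IsWeaklyCompactOperator W ∧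
      (∀ f : Lp ℝ 1 μ, ∀ᵐ y ∂ν, y ∉ Θ → (W f : Y → ℝ) y = 0) ∧ r = ‖T - W‖}.Nonempty :=
    ⟨‖T - 0‖, 0, hW0, hsupp0, rfl⟩
  refine le_csInf hne ?_
  rintro b ⟨W, hWc, hWsupp, rfl⟩
  -- reduce to: for every ε > 0, `alphaTheta T Θ ≤ ‖T - W‖ + ε`
  refine le_of_forall_pos_le_add fun ε hε => ?_
  obtain ⟨δ, hδ, hkey⟩ := AlphaAux.key W hWc hε
  -- the inner sup at level δ
  set Sδ : Set ℝ := {s : ℝ | ∃ B : Set Y, B ⊆ Θ ∧ MeasurableSet B ∧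
    ν B < ENNReal.ofReal δ ∧ s = opNormOn T (Θᶜ ∪ B)} with hSδdef
  have hSδne : Sδ.Nonempty :=
    ⟨opNormOn T (Θᶜ ∪ ∅), ∅, Set.empty_subset _, MeasurableSet.empty,
      by simp [ENNReal.ofReal_pos.2 hδ], rfl⟩
  have hSδub : ∀ s ∈ Sδ, s ≤ ‖T‖ := by
    rintro s ⟨B, hBΘ, hB, hνB, rfl⟩
    exact opNormOn_le_norm T _
  have hSδlb : ∀ s ∈ Sδ, 0 ≤ s := by
    rintro s ⟨B, hBΘ, hB, hνB, rfl⟩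
    exact opNormOn_nonneg T _
  -- `alphaTheta` is at most this sup
  have hmem : sSup Sδ ∈ {r : ℝ | ∃ δ' : ℝ, 0 < δ' ∧
      r = sSup {s : ℝ | ∃ B : Set Y, B ⊆ Θ ∧ MeasurableSet B ∧ ν B < ENNReal.ofReal δ' ∧
        s = opNormOn T (Θᶜ ∪ B)}} := ⟨δ, hδ, rfl⟩
  have hbdd : BddBelow {r : ℝ | ∃ δ' : ℝ, 0 < δ' ∧
      r = sSup {s : ℝ | ∃ B : Set Y, B ⊆ Θ ∧ MeasurableSet B ∧ ν B < ENNReal.ofReal δ' ∧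
        s = opNormOn T (Θᶜ ∪ B)}} := by
    refine ⟨0, ?_⟩
    rintro r ⟨δ', hδ', rfl⟩
    have hub' : ∀ s ∈ {s : ℝ | ∃ B : Set Y, B ⊆ Θ ∧ MeasurableSet B ∧
        ν B < ENNReal.ofReal δ' ∧ s = opNormOn T (Θᶜ ∪ B)}, s ≤ ‖T‖ := by
      rintro s ⟨B, hBΘ, hB, hνB, rfl⟩
      exact opNormOn_le_norm T _
    have hmem' : opNormOn T (Θᶜ ∪ ∅) ∈ {s : ℝ | ∃ B : Set Y, B ⊆ Θ ∧ MeasurableSet B ∧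
        ν B < ENNReal.ofReal δ' ∧ s = opNormOn T (Θᶜ ∪ B)} :=
      ⟨∅, Set.empty_subset _, MeasurableSet.empty,
        by simp [ENNReal.ofReal_pos.2 hδ'], rfl⟩
    exact le_csSup_of_le ⟨‖T‖, hub'⟩ hmem' (opNormOn_nonneg T _)
  have hstep1 : alphaTheta T Θ ≤ sSup Sδ := csInf_le hbdd hmem
  -- now bound the sup
  have hstep2 : sSup Sδ ≤ ‖T - W‖ + ε := by
    refine csSup_le hSδne ?_
    rintro s ⟨B, hBΘ, hB, hνB, rfl⟩
    -- bound `opNormOn T (Θᶜ ∪ B)`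
    refine csSup_le ⟨0, zero_mem_opSet T _⟩ ?_
    rintro r ⟨f, hf, rfl⟩
    set S : Set Y := Θᶜ ∪ B with hSdef
    have hSmeas : MeasurableSet S := hΘ.compl.union hB
    have hrw : ((T - W) f : Y → ℝ) =ᵐ[ν] fun y => (T f : Y → ℝ) y - (W f : Y → ℝ) y := by
      rw [ContinuousLinearMap.sub_apply]
      exact Lp.coeFn_sub (T f) (W f)
    have hint1 : Integrable (fun y => |((T - W) f : Y → ℝ) y|) ν :=
      (L1.integrable_coeFn _).abs
    have hint2 : Integrable (fun y => |(W f : Y → ℝ) y|) ν :=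
      (L1.integrable_coeFn _).abs
    have hmono : ∫ y in S, |(T f : Y → ℝ) y| ∂ν
        ≤ (∫ y in S, |((T - W) f : Y → ℝ) y| ∂ν) + ∫ y in S, |(W f : Y → ℝ) y| ∂ν := by
      rw [← integral_add hint1.integrableOn hint2.integrableOn]
      refine integral_mono_ae ((L1.integrable_coeFn (T f)).abs).integrableOn
        (hint1.integrableOn.add hint2.integrableOn) ?_
      filter_upwards [ae_restrict_of_ae hrw] with y hy
      rw [hy]
      have := abs_sub_abs_le_abs_sub ((T f : Y → ℝ) y) ((W f : Y → ℝ) y)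
      have h2 : |(T f : Y → ℝ) y - (W f : Y → ℝ) y| = |(T f : Y → ℝ) y - (W f : Y → ℝ) y| := rfl
      have h3 := abs_sub_abs_le_abs_sub ((T f : Y → ℝ) y) ((W f : Y → ℝ) y)
      linarith [abs_nonneg ((W f : Y → ℝ) y), abs_sub ((T f : Y → ℝ) y) ((W f : Y → ℝ) y)]
    have hTW : ∫ y in S, |((T - W) f : Y → ℝ) y| ∂ν ≤ ‖T - W‖ := by
      calc ∫ y in S, |((T - W) f : Y → ℝ) y| ∂ν ≤ ‖(T - W) f‖ :=
          AlphaAux.setIntegral_abs_le_norm ((T - W) f) S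
        _ ≤ ‖T - W‖ * ‖f‖ := (T - W).le_opNorm f
        _ ≤ ‖T - W‖ * 1 := mul_le_mul_of_nonneg_left hf (norm_nonneg _)
        _ = ‖T - W‖ := mul_one _
    have hWB : ∫ y in S, |(W f : Y → ℝ) y| ∂ν ≤ ε := by
      have hdisjΘ : Disjoint (Θᶜ) B := Set.disjoint_left.2 fun y hy hyB => hy (hBΘ hyB)
      have hsplit : ∫ y in S, |(W f : Y → ℝ) y| ∂ν
          = (∫ y in Θᶜ, |(W f : Y → ℝ) y| ∂ν) + ∫ y in B, |(W f : Y → ℝ) y| ∂ν := by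
        rw [hSdef]
        exact setIntegral_union hdisjΘ hB hint2.integrableOn hint2.integrableOn
      have hzero : ∫ y in Θᶜ, |(W f : Y → ℝ) y| ∂ν = 0 := by
        refine integral_eq_zero_of_ae ?_
        filter_upwards [ae_restrict_of_ae (hWsupp f), ae_restrict_mem hΘ.compl]
          with y h1 h2
        simp [h1 h2]
      rw [hsplit, hzero, zero_add]
      exact hkey B hB hνB f hf
    linarith
  exact le_trans hstep1 hstep2
end

section
/- Let (X, Σ, μ) and (Y, Γ, ν) be strictly localizable measure spaces and W : L¹(X, Σ, μ) → L¹(Y, Γ, ν) a weakly compact operator. Then there exists a σ-finite measurable set Θ ⊆ Y such that the range of W is contained in L¹(Θ, γ, ν), where γ = {A ∩ Θ : A ∈ Γ}. -/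
open MeasureTheory

open Set Function Filter
open scoped ENNReal NNReal Topology

lemma indicator_tsum_le_of_subset {s t : Set ℕ} (h : s ⊆ t) (f : ℕ → ℝ≥0∞) :
    ∑' n, s.indicator f n ≤ ∑' n, t.indicator f n :=
  Summable.tsum_le_tsum (fun n => Set.indicator_le_indicator_of_subset h (fun _ => zero_le) n)
    ENNReal.summable ENNReal.summable

lemma rosenthal (r : ℕ → ℕ → ℝ≥0∞) (M ε : ℝ≥0∞) (hM : M ≠ ⊤) (hε : ε ≠ 0)
    (hr : ∀ m, ∑' n, r m n ≤ M) :
    ∃ N : Set ℕ, N.Infinite ∧ ∀ m ∈ N, ∑' n, (N \ {m}).indicator (r m) n ≤ ε := by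
  classical
  -- choose k₀ with M < k₀ * ε
  obtain ⟨k₀, hk₀⟩ : ∃ k : ℕ, M < (k : ℝ≥0∞) * ε := by
    rcases eq_or_ne ε ⊤ with hT | hT
    · exact ⟨1, by simp [hT, lt_top_iff_ne_top, hM]⟩
    · obtain ⟨n, hn⟩ := ENNReal.exists_nat_gt (ENNReal.div_lt_top hM hε).ne
      exact ⟨n, (ENNReal.div_lt_iff (Or.inl hε) (Or.inl hT)).mp hn⟩
  set Good : Prop :=
    ∃ N : Set ℕ, N.Infinite ∧ ∀ m ∈ N, ∑' n, (N \ {m}).indicator (r m) n ≤ ε with hGood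
  -- blocks
  set B : ℕ → Set ℕ := fun q => Set.range (fun l => Nat.pair q l) with hB
  have hBinf : ∀ q, (B q).Infinite := fun q =>
    Set.infinite_range_of_injective (fun a b hab => by
      have := congrArg (fun n => (Nat.unpair n).2) hab
      simpa using this)
  have hBdisj : ∀ q q', q ≠ q' → Disjoint (B q) (B q') := by
    intro q q' hqq'
    rw [Set.disjoint_left]
    rintro x ⟨l, rfl⟩ ⟨l', hx⟩
    apply hqq'
    have := congrArg (fun n => (Nat.unpair n).1) hx
    simpa using this.symm
  suffices H : ∀ d k (f : ℕ → ℕ) (C : ℕ → Set ℕ), k₀ ≤ k + d →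
      Function.Injective f → Pairwise (Function.onFun Disjoint C) →
      (∀ j, f j ∈ C j) →
      (∀ j, (k : ℝ≥0∞) * ε ≤ ∑' n, (C j).indicator (r (f j)) n) → Good by
    refine H k₀ 0 id (fun j => {j}) (by simp) injective_id ?_ (fun j => rfl) (by simp)
    intro a b hab
    simp [Function.onFun, Set.disjoint_singleton, hab]
  intro d
  induction d with
  | zero =>
    intro k f C hk _ _ _ hdiag
    exfalso
    have h1 : M < (k : ℝ≥0∞) * ε :=
      lt_of_lt_of_le hk₀ (mul_le_mul_left (by exact_mod_cast by simpa using hk) ε)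
    have h2 : (k : ℝ≥0∞) * ε ≤ M := by
      refine le_trans (hdiag 0) (le_trans ?_ (hr (f 0)))
      exact Summable.tsum_le_tsum (fun n => Set.indicator_le_self _ _ n) ENNReal.summable ENNReal.summable
    exact absurd (lt_of_lt_of_le h1 h2) (lt_irrefl _)
  | succ d ih =>
    intro k f C hk hf hC hmem hdiag
    set good : ℕ → ℕ → Prop := fun q j =>
      ∑' n, (⋃ j' ∈ B q \ {j}, C j').indicator (r (f j)) n ≤ ε with hgood
    by_cases hcase : ∃ q, {j | j ∈ B q ∧ good q j}.Infinite
    · obtain ⟨q, hG⟩ := hcase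
      set G := {j | j ∈ B q ∧ good q j} with hGdef
      refine ⟨f '' G, hG.image (Set.injOn_of_injective hf), ?_⟩
      rintro m hm
      obtain ⟨j, hjG, rfl⟩ := hm
      refine le_trans (indicator_tsum_le_of_subset ?_ _) hjG.2
      rintro x ⟨hx, hxm⟩
      obtain ⟨j', hj'G, rfl⟩ := hx
      have hj'  : j' ≠ j := fun h => hxm (by rw [h]; rfl)
      exact Set.mem_biUnion ⟨hj'G.1, by simpa using fun h => hj' h⟩ (hmem j')
    · push_neg at hcase
      -- for each q pick a bad j in B q
      have hbad : ∀ q, ∃ j, j ∈ B q ∧ ¬ good q j := by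
        intro q
        have : (B q \ {j | j ∈ B q ∧ good q j}).Infinite :=
          (hBinf q).diff (hcase q)
        obtain ⟨j, hj⟩ := this.nonempty
        exact ⟨j, hj.1, fun h => hj.2 ⟨hj.1, h⟩⟩
      choose jb hjbB hjbbad using hbad
      have hjb_inj : Function.Injective jb := by
        intro q q' h
        by_contra hqq'
        exact (hBdisj q q' hqq').ne_of_mem (hjbB q) (by rw [h]; exact hjbB q') rfl
      refine ih (k + 1) (f ∘ jb) (fun q => ⋃ j ∈ B q, C j) (by omega)
        (hf.comp hjb_inj) ?_ (fun q => Set.mem_biUnion (hjbB q) (hmem (jb q))) ?_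
      · intro q q' hqq'
        simp only [Function.onFun]
        rw [Set.disjoint_left]
        rintro x hx hx'
        simp only [Set.mem_iUnion] at hx hx'
        obtain ⟨j, hj, hxj⟩ := hx
        obtain ⟨j', hj', hxj'⟩ := hx'
        have hjj' : j ≠ j' := fun h =>
          (hBdisj q q' hqq').ne_of_mem hj (h ▸ hj') rfl
        exact (hC hjj').ne_of_mem hxj hxj' rfl
      · intro q
        have hsplit : (⋃ j ∈ B q, C j) = C (jb q) ∪ ⋃ j' ∈ B q \ {jb q}, C j' := by
          ext x
          simp only [Set.mem_iUnion, Set.mem_union, Set.mem_diff, Set.mem_singleton_iff]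
          constructor
          · rintro ⟨j, hj, hx⟩
            by_cases hjq : j = jb q
            · exact Or.inl (hjq ▸ hx)
            · exact Or.inr ⟨j, ⟨hj, hjq⟩, hx⟩
          · rintro (hx | ⟨j, ⟨hj, _⟩, hx⟩)
            · exact ⟨jb q, hjbB q, hx⟩
            · exact ⟨j, hj, hx⟩
        have hdisj2 : Disjoint (C (jb q)) (⋃ j' ∈ B q \ {jb q}, C j') := by
          rw [Set.disjoint_right]
          rintro x hx hx'
          simp only [Set.mem_iUnion, Set.mem_diff, Set.mem_singleton_iff] at hx
          obtain ⟨j, ⟨_, hjne⟩, hxj⟩ := hx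
          exact (hC hjne).ne_of_mem hxj hx' rfl
        have : ∑' n, ((⋃ j ∈ B q, C j)).indicator (r (f (jb q))) n
            = (∑' n, (C (jb q)).indicator (r (f (jb q))) n)
              + ∑' n, (⋃ j' ∈ B q \ {jb q}, C j').indicator (r (f (jb q))) n := by
          rw [← ENNReal.tsum_add]
          congr 1
          ext n
          rw [hsplit, Set.indicator_union_of_disjoint hdisj2]
        simp only [Function.comp_apply]
        rw [this]
        push_cast
        rw [add_mul, one_mul]
        exact add_le_add (hdiag (jb q)) (le_of_not_ge (hjbbad q))


lemma measurable_realSign : Measurable Real.sign := by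
  have : Real.sign = fun x : ℝ => if x < 0 then (-1 : ℝ) else if 0 < x then 1 else 0 := by
    ext x
    rcases lt_trichotomy x 0 with h | h | h
    · simp [Real.sign_of_neg h, h]
    · simp [h, Real.sign_zero]
    · simp [Real.sign_of_pos h, h, not_lt.mpr h.le]
  rw [this]
  exact Measurable.ite (measurableSet_lt measurable_id measurable_const) measurable_const
    (Measurable.ite (measurableSet_lt measurable_const measurable_id) measurable_const
      measurable_const)

lemma abs_realSign_le_one (x : ℝ) : |Real.sign x| ≤ 1 := by
  rcases lt_trichotomy x 0 with h | h | h
  · simp [Real.sign_of_neg h]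
  · simp [h, Real.sign_zero]
  · simp [Real.sign_of_pos h]

lemma mul_realSign_eq_abs (x : ℝ) : x * Real.sign x = |x| := by
  rcases lt_trichotomy x 0 with h | h | h
  · simp [Real.sign_of_neg h, abs_of_neg h]
  · simp [h]
  · simp [Real.sign_of_pos h, abs_of_pos h]

lemma core_contradiction {Y : Type*} [MeasurableSpace Y] (ν : Measure Y)
    (Z : ℕ → Set Y) (hZm : ∀ n, MeasurableSet (Z n))
    (hZd : Pairwise (Function.onFun Disjoint Z))
    (C : Set (WeakSpace ℝ (Lp ℝ 1 ν))) (hC : IsCompact C)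
    (g : ℕ → Lp ℝ 1 ν) (hg : ∀ n, toWeakSpace ℝ (Lp ℝ 1 ν) (g n) ∈ C)
    (Mb : ℝ≥0∞) (hMb : Mb ≠ ⊤)
    (hnorm : ∀ m, ∫⁻ y, ‖(g m : Y → ℝ) y‖₊ ∂ν ≤ Mb)
    (ε₀ : ℝ) (hε₀ : 0 < ε₀)
    (hdiag : ∀ m, ENNReal.ofReal ε₀ ≤ ∫⁻ y in Z m, ‖(g m : Y → ℝ) y‖₊ ∂ν) :
    False := by
  classical
  set R : ℕ → ℕ → ℝ≥0∞ := fun m n => ∫⁻ y in Z n, ‖(g m : Y → ℝ) y‖₊ ∂ν with hR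
  have hrow : ∀ m, ∑' n, R m n ≤ Mb := by
    intro m
    calc ∑' n, R m n = ∫⁻ y in ⋃ n, Z n, ‖(g m : Y → ℝ) y‖₊ ∂ν :=
          (lintegral_iUnion hZm hZd _).symm
      _ ≤ ∫⁻ y, ‖(g m : Y → ℝ) y‖₊ ∂ν := lintegral_mono' Measure.restrict_le_self le_rfl
      _ ≤ Mb := hnorm m
  set ε' : ℝ≥0∞ := ENNReal.ofReal (ε₀ / 8) with hε'
  have hε'0 : ε' ≠ 0 := by
    simp only [hε', ne_eq, ENNReal.ofReal_eq_zero, not_le]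
    positivity
  have hε'top : ε' ≠ ⊤ := ENNReal.ofReal_ne_top
  have hε'toReal : ε'.toReal = ε₀ / 8 := ENNReal.toReal_ofReal (by positivity)
  obtain ⟨N, hNinf, hNgood⟩ := rosenthal R Mb ε' hMb hε'0 hrow
  -- an ultrafilter containing N and all cofinite sets
  have hneBot : (Filter.cofinite ⊓ Filter.principal N).NeBot := by
    rw [Filter.inf_principal_neBot_iff]
    intro U hU
    rw [Filter.mem_cofinite] at hU
    have : (N \ Uᶜ).Infinite := hNinf.diff hU
    obtain ⟨x, hx⟩ := this.nonempty
    exact ⟨x, by simpa using hx.2, hx.1⟩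
  set U : Ultrafilter ℕ := @Ultrafilter.of ℕ (Filter.cofinite ⊓ Filter.principal N) hneBot
    with hU
  have hUle : (U : Filter ℕ) ≤ Filter.cofinite ⊓ Filter.principal N := Ultrafilter.of_le _
  have hNU : N ∈ U := hUle (Filter.mem_inf_of_right (Filter.mem_principal_self N))
  -- weak cluster point
  have hle : (U.map fun n => toWeakSpace ℝ (Lp ℝ 1 ν) (g n) : Filter (WeakSpace ℝ (Lp ℝ 1 ν))) ≤
      Filter.principal C := by
    rw [Filter.le_principal_iff]
    exact Filter.mem_map.mpr (Filter.univ_mem' fun n => hg n)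
  obtain ⟨xb, hxbC, hconv⟩ := hC.ultrafilter_le_nhds (U.map fun n => toWeakSpace ℝ (Lp ℝ 1 ν) (g n)) hle
  set gb : Lp ℝ 1 ν := (toWeakSpace ℝ (Lp ℝ 1 ν)).symm xb with hgb
  -- mass of gb on the pieces
  set δ : ℕ → ℝ≥0∞ := fun n => ∫⁻ y in Z n, ‖(gb : Y → ℝ) y‖₊ ∂ν with hδ
  have hδtot : ∑' n, δ n ≠ ⊤ := by
    have h1 : ∑' n, δ n = ∫⁻ y in ⋃ n, Z n, ‖(gb : Y → ℝ) y‖₊ ∂ν :=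
      (lintegral_iUnion hZm hZd _).symm
    have h2 : ∫⁻ y in ⋃ n, Z n, ‖(gb : Y → ℝ) y‖₊ ∂ν ≤ ∫⁻ y, ‖(gb : Y → ℝ) y‖₊ ∂ν :=
      lintegral_mono' Measure.restrict_le_self le_rfl
    have h3 : ∫⁻ y, ‖(gb : Y → ℝ) y‖₊ ∂ν = eLpNorm (gb : Y → ℝ) 1 ν :=
      (eLpNorm_one_eq_lintegral_enorm (f := (gb : Y → ℝ))).symm
    rw [h1]
    exact (lt_of_le_of_lt h2 (by rw [h3]; exact (Lp.eLpNorm_lt_top gb))).ne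
  -- a tail of δ with small sum
  obtain ⟨F, hF⟩ : ∃ F : Finset ℕ, ∑' n, δ n < (∑ n ∈ F, δ n) + ε' := by
    by_contra hcon
    push_neg at hcon
    rcases eq_or_ne (∑' n, δ n) 0 with h0 | h0
    · have := hcon ∅
      simp only [Finset.sum_empty, zero_add, h0] at this
      exact hε'0 (le_antisymm this zero_le)
    · have hsup : ∑' n, δ n ≤ ∑' n, δ n - ε' := by
        conv_lhs => rw [ENNReal.tsum_eq_iSup_sum]
        refine iSup_le fun F => ?_
        exact (ENNReal.cancel_of_ne hε'top).le_tsub_of_add_le_right (hcon F)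
      have : ∑' n, δ n - ε' < ∑' n, δ n := ENNReal.sub_lt_self hδtot h0 hε'0
      exact absurd (lt_of_le_of_lt hsup this) (lt_irrefl _)
  set K : ℕ := F.sup id + 1 with hK
  set T : Set ℕ := {n | K ≤ n} with hT
  have hTdisj : Disjoint T (↑F : Set ℕ) := by
    rw [Set.disjoint_left]
    intro n hn hnF
    have : n ≤ F.sup id := Finset.le_sup (f := id) hnF
    simp only [hT, Set.mem_setOf_eq, hK] at hn
    omega
  have htail : ∑' n, T.indicator δ n ≤ ε' := by
    have h1 : (∑ n ∈ F, δ n) = ∑' n, (↑F : Set ℕ).indicator δ n := sum_eq_tsum_indicator δ F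
    have h2 : ∑' n, T.indicator δ n + ∑' n, (↑F : Set ℕ).indicator δ n
        = ∑' n, (T ∪ ↑F).indicator δ n := by
      rw [← ENNReal.tsum_add]
      congr 1
      ext n
      rw [Set.indicator_union_of_disjoint hTdisj]
    have h3 : ∑' n, (T ∪ ↑F).indicator δ n ≤ ∑' n, δ n :=
      Summable.tsum_le_tsum (fun n => Set.indicator_le_self _ _ n) ENNReal.summable ENNReal.summable
    have h4 : ∑' n, T.indicator δ n + ∑' n, (↑F : Set ℕ).indicator δ n
        < ε' + ∑' n, (↑F : Set ℕ).indicator δ n := by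
      rw [h2]
      refine lt_of_le_of_lt h3 ?_
      rw [← h1]
      rw [add_comm] at hF
      exact hF
    have hFne : ∑' n, (↑F : Set ℕ).indicator δ n ≠ ⊤ := by
      refine ne_top_of_le_ne_top hδtot ?_
      exact Summable.tsum_le_tsum (fun n => Set.indicator_le_self _ _ n) ENNReal.summable ENNReal.summable
    exact le_of_lt ((ENNReal.add_lt_add_iff_right hFne).mp h4)
  set N' : Set ℕ := N ∩ T with hN'
  have hN'inf : N'.Infinite := by
    have hfin : Tᶜ.Finite := by
      have : Tᶜ ⊆ {n | n < K} := by
        intro n hn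
        simp only [hT, Set.mem_compl_iff, Set.mem_setOf_eq, not_le] at hn
        exact hn
      exact (Set.finite_lt_nat K).subset this
    have := hNinf.diff hfin
    rwa [Set.diff_eq, compl_compl] at this
  have hN'U : N' ∈ U := by
    refine Filter.inter_mem hNU (hUle (Filter.mem_inf_of_left ?_))
    rw [Filter.mem_cofinite]
    refine (Set.finite_lt_nat K).subset ?_
    intro n hn
    simp only [hT, Set.mem_compl_iff, Set.mem_setOf_eq, not_le] at hn
    exact hn
  -- enumeration of N'
  have hN'inf' : (setOf (· ∈ N')).Infinite := hN'inf
  set u : ℕ → ℕ := Nat.nth (· ∈ N') with hu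
  have hu_mem : ∀ k, u k ∈ N' := fun k => Nat.nth_mem_of_infinite hN'inf' k
  have hu_inj : Function.Injective u := Nat.nth_injective hN'inf'
  have hu_surj : ∀ m ∈ N', ∃ k, u k = m := by
    intro m hm
    have : m ∈ Set.range u := by
      rw [hu, Nat.range_nth_of_infinite hN'inf']
      exact hm
    exact this
  -- the sign function
  set sfun : ℕ → Y → ℝ :=
    fun k => (Z (u k)).indicator (fun y => Real.sign ((g (u k) : Y → ℝ) y)) with hsfun
  set s : Y → ℝ := fun y => ∑' k, sfun k y with hs
  have hsummable : ∀ y, Summable (fun k => sfun k y) := by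
    intro y
    by_cases hy : ∃ k, y ∈ Z (u k)
    · obtain ⟨k, hk⟩ := hy
      refine summable_of_ne_finset_zero (s := {k}) ?_
      intro k' hk'
      simp only [Finset.mem_singleton] at hk'
      have : y ∉ Z (u k') := by
        intro hmem
        exact (hZd (hu_inj.ne hk')).ne_of_mem hmem hk rfl
      simp [hsfun, Set.indicator_of_notMem this]
    · push_neg at hy
      refine summable_of_ne_finset_zero (s := ∅) ?_
      intro k _
      simp [hsfun, Set.indicator_of_notMem (hy k)]
  have hs_single : ∀ k y, y ∈ Z (u k) → s y = Real.sign ((g (u k) : Y → ℝ) y) := by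
    intro k y hy
    have h0 : ∀ k', k' ≠ k → sfun k' y = 0 := by
      intro k' hk'
      have : y ∉ Z (u k') := fun hmem => (hZd (hu_inj.ne hk')).ne_of_mem hmem hy rfl
      simp [hsfun, Set.indicator_of_notMem this]
    have hsy : s y = ∑' k, sfun k y := rfl
    rw [hsy, tsum_eq_single k h0]
    simp [hsfun, Set.indicator_of_mem hy]
  have hs_zero : ∀ y, (∀ k, y ∉ Z (u k)) → s y = 0 := by
    intro y hy
    have hsy : s y = ∑' k, sfun k y := rfl
    rw [hsy]
    convert tsum_zero with k
    simp [hsfun, Set.indicator_of_notMem (hy k)]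
  have hs_bdd : ∀ y, ‖s y‖ ≤ 1 := by
    intro y
    by_cases hy : ∃ k, y ∈ Z (u k)
    · obtain ⟨k, hk⟩ := hy
      rw [hs_single k y hk, Real.norm_eq_abs]
      exact abs_realSign_le_one _
    · push_neg at hy
      rw [hs_zero y hy]
      simp
  have hs_meas : Measurable s := by
    refine measurable_of_tendsto_metrizable
      (f := fun K y => ∑ k ∈ Finset.range K, sfun k y) ?_ ?_
    · intro K
      refine Finset.measurable_sum _ fun k _ => ?_
      exact (measurable_realSign.comp (Lp.stronglyMeasurable (g (u k))).measurable).indicator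
        (hZm (u k))
    · rw [tendsto_pi_nhds]
      intro y
      exact (hsummable y).hasSum.tendsto_sum_nat
  -- integrability
  have hint : ∀ h : Lp ℝ 1 ν, Integrable (fun y => (h : Y → ℝ) y * s y) ν := by
    intro h
    have := (L1.integrable_coeFn h).bdd_mul (c := 1) hs_meas.aestronglyMeasurable (Filter.Eventually.of_forall fun y => hs_bdd y)
    exact this.congr (Filter.Eventually.of_forall fun y => mul_comm _ _)
  -- the functional
  have hb : ∀ h : Lp ℝ 1 ν, ‖∫ y, (h : Y → ℝ) y * s y ∂ν‖ ≤ 1 * ‖h‖ := by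
    intro h
    rw [one_mul, L1.norm_eq_integral_norm]
    refine le_trans (norm_integral_le_integral_norm _) ?_
    refine integral_mono (hint h).norm (L1.integrable_coeFn h).norm ?_
    intro y
    show ‖(h : Y → ℝ) y * s y‖ ≤ ‖(h : Y → ℝ) y‖
    rw [norm_mul]
    exact mul_le_of_le_one_right (norm_nonneg _) (hs_bdd y)
  set φL : Lp ℝ 1 ν →ₗ[ℝ] ℝ :=
    { toFun := fun h => ∫ y, (h : Y → ℝ) y * s y ∂ν
      map_add' := by
        intro h₁ h₂
        show (∫ y, ((h₁ + h₂ : Lp ℝ 1 ν) : Y → ℝ) y * s y ∂ν)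
          = (∫ y, (h₁ : Y → ℝ) y * s y ∂ν) + ∫ y, (h₂ : Y → ℝ) y * s y ∂ν
        have hae : ((h₁ + h₂ : Lp ℝ 1 ν) : Y → ℝ) =ᵐ[ν] fun y => (h₁ : Y → ℝ) y + (h₂ : Y → ℝ) y := by
          filter_upwards [Lp.coeFn_add h₁ h₂] with y hy
          simpa using hy
        have h1 : ∫ y, ((h₁ + h₂ : Lp ℝ 1 ν) : Y → ℝ) y * s y ∂ν
            = ∫ y, ((h₁ : Y → ℝ) y + (h₂ : Y → ℝ) y) * s y ∂ν := by
          refine integral_congr_ae (hae.mono fun y hy => ?_)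
          dsimp only
          rw [hy]
        rw [h1]
        simp_rw [add_mul]
        exact integral_add (hint h₁) (hint h₂)
      map_smul' := by
        intro c h
        show (∫ y, ((c • h : Lp ℝ 1 ν) : Y → ℝ) y * s y ∂ν)
          = (RingHom.id ℝ) c • ∫ y, (h : Y → ℝ) y * s y ∂ν
        have hae : ((c • h : Lp ℝ 1 ν) : Y → ℝ) =ᵐ[ν] fun y => c * (h : Y → ℝ) y := by
          filter_upwards [Lp.coeFn_smul c h] with y hy
          simpa using hy
        have h1 : ∫ y, ((c • h : Lp ℝ 1 ν) : Y → ℝ) y * s y ∂ν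
            = ∫ y, (c * (h : Y → ℝ) y) * s y ∂ν := by
          refine integral_congr_ae (hae.mono fun y hy => ?_)
          dsimp only
          rw [hy]
        rw [h1]
        simp_rw [mul_assoc, ← smul_eq_mul (a := c)]
        rw [integral_smul]
        simp [smul_eq_mul] } with hφL
  set φ : Lp ℝ 1 ν →L[ℝ] ℝ := φL.mkContinuous 1 hb with hφ
  have hφ_apply : ∀ h : Lp ℝ 1 ν, φ h = ∫ y, (h : Y → ℝ) y * s y ∂ν := fun h => rfl
  -- weak convergence of φ values
  have hcont : Continuous fun w : WeakSpace ℝ (Lp ℝ 1 ν) => φ ((toWeakSpace ℝ (Lp ℝ 1 ν)).symm w) := by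
    exact WeakBilin.eval_continuous _ φ
  have hφconv : Filter.Tendsto (fun n => φ (g n)) (U : Filter ℕ) (𝓝 (φ gb)) := by
    have h1 : Filter.Tendsto (fun n => toWeakSpace ℝ (Lp ℝ 1 ν) (g n)) (U : Filter ℕ) (𝓝 xb) := hconv
    have h2 := (hcont.tendsto xb).comp h1
    simp only [Function.comp_def, LinearEquiv.symm_apply_apply] at h2
    rw [hgb]
    exact h2
  -- the support set
  set Uset : Set Y := ⋃ k, Z (u k) with hUset
  have hUm : MeasurableSet Uset := MeasurableSet.iUnion fun k => hZm (u k)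
  have hfull : ∀ h : Lp ℝ 1 ν, ∫ y, (h : Y → ℝ) y * s y ∂ν = ∫ y in Uset, (h : Y → ℝ) y * s y ∂ν := by
    intro h
    refine (setIntegral_eq_integral_of_forall_compl_eq_zero fun y hy => ?_).symm
    have : ∀ k, y ∉ Z (u k) := by
      intro k hk
      exact hy (Set.mem_iUnion.mpr ⟨k, hk⟩)
    rw [hs_zero y this, mul_zero]
  have habs : ∀ (h : Lp ℝ 1 ν) (A : Set Y), |∫ y in A, (h : Y → ℝ) y * s y ∂ν|
      ≤ (∫⁻ y in A, ‖(h : Y → ℝ) y‖₊ ∂ν).toReal := by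
    intro h A
    rw [← Real.norm_eq_abs]
    refine le_trans (norm_integral_le_lintegral_norm _) ?_
    have hmono : ∫⁻ y in A, ENNReal.ofReal ‖(h : Y → ℝ) y * s y‖ ∂ν
        ≤ ∫⁻ y in A, (‖(h : Y → ℝ) y‖₊ : ℝ≥0∞) ∂ν := by
      refine lintegral_mono fun y => ?_
      rw [ofReal_norm, enorm_eq_nnnorm, nnnorm_mul, ENNReal.coe_mul]
      refine mul_le_of_le_one_right zero_le ?_
      rw [← ENNReal.coe_one, ENNReal.coe_le_coe, ← NNReal.coe_le_coe]
      simpa using hs_bdd y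
    have hfin : ∫⁻ y in A, (‖(h : Y → ℝ) y‖₊ : ℝ≥0∞) ∂ν ≠ ⊤ := by
      refine ne_top_of_le_ne_top ?_ (lintegral_mono' Measure.restrict_le_self le_rfl)
      change ∫⁻ y, ‖(h : Y → ℝ) y‖ₑ ∂ν ≠ ⊤
      rw [← eLpNorm_one_eq_lintegral_enorm]
      exact Lp.eLpNorm_ne_top h
    exact ENNReal.toReal_mono hfin hmono
  -- choose the witness m
  have hTU2 : {n | dist (φ (g n)) (φ gb) < ε₀ / 2} ∈ U := by
    have := Metric.tendsto_nhds.mp hφconv (ε₀ / 2) (by positivity)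
    exact this
  obtain ⟨m, hmN', hmdist⟩ := Ultrafilter.nonempty_of_mem (Filter.inter_mem hN'U hTU2)
  obtain ⟨k₀, hk₀⟩ := hu_surj m hmN'
  have hmN : m ∈ N := hmN'.1
  -- diagonal lower bound
  have hRne : ∀ n, R m n ≠ ⊤ := fun n => ne_top_of_le_ne_top hMb
    (le_trans (ENNReal.le_tsum n) (hrow m))
  have hdiagm : (ε₀ : ℝ) ≤ ∫ y in Z m, (g m : Y → ℝ) y * s y ∂ν := by
    have hEq : ∫ y in Z m, (g m : Y → ℝ) y * s y ∂ν = ∫ y in Z m, ‖(g m : Y → ℝ) y‖ ∂ν := by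
      refine setIntegral_congr_fun (hZm m) fun y hy => ?_
      have hsy : s y = Real.sign ((g m : Y → ℝ) y) := by
        rw [← hk₀] at hy ⊢
        exact hs_single k₀ y hy
      rw [hsy, mul_realSign_eq_abs, Real.norm_eq_abs]
    rw [hEq]
    have h2 : ∫ y in Z m, ‖(g m : Y → ℝ) y‖ ∂ν = (R m m).toReal := by
      rw [hR]
      exact integral_norm_eq_lintegral_enorm (Lp.aestronglyMeasurable (g m)).restrict
    rw [h2]
    calc (ε₀ : ℝ) = (ENNReal.ofReal ε₀).toReal := (ENNReal.toReal_ofReal hε₀.le).symm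
      _ ≤ (R m m).toReal := ENNReal.toReal_mono (hRne m) (hdiag m)
  -- off-diagonal estimate
  have hoff : |∫ y in Uset \ Z m, (g m : Y → ℝ) y * s y ∂ν| ≤ ε₀ / 8 := by
    refine le_trans (habs (g m) _) ?_
    have hsub : ∫⁻ y in Uset \ Z m, (‖(g m : Y → ℝ) y‖₊ : ℝ≥0∞) ∂ν ≤ ε' := by
      set V : ℕ → Set Y := fun k => if u k = m then ∅ else Z (u k) with hV
      have hUsub : Uset \ Z m ⊆ ⋃ k, V k := by
        rintro y ⟨hyU, hyZ⟩
        obtain ⟨k, hk⟩ := Set.mem_iUnion.mp hyU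
        refine Set.mem_iUnion.mpr ⟨k, ?_⟩
        rw [hV]
        simp only
        split_ifs with h
        · exact absurd (h ▸ hk) hyZ
        · exact hk
      refine le_trans (lintegral_mono_set hUsub) ?_
      refine le_trans (lintegral_iUnion_le _ _) ?_
      set G : ℕ → ℝ≥0∞ := (N \ {m}).indicator (fun n => R m n) with hG
      have hVeq : ∀ k, ∫⁻ y in V k, (‖(g m : Y → ℝ) y‖₊ : ℝ≥0∞) ∂ν = G (u k) := by
        intro k
        simp only [hV, hG]
        by_cases h : u k = m
        · rw [if_pos h, Measure.restrict_empty, lintegral_zero_measure, h,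
            Set.indicator_of_notMem (by simp)]
        · rw [if_neg h, Set.indicator_of_mem (by
            simp only [Set.mem_diff, Set.mem_singleton_iff]
            exact ⟨(hu_mem k).1, h⟩)]
      calc ∑' k, ∫⁻ y in V k, (‖(g m : Y → ℝ) y‖₊ : ℝ≥0∞) ∂ν = ∑' k, G (u k) := by
            congr 1; ext k; exact hVeq k
        _ ≤ ∑' n, G n := ENNReal.tsum_comp_le_tsum_of_injective hu_inj G
        _ ≤ ε' := hNgood m hmN
    calc (∫⁻ y in Uset \ Z m, (‖(g m : Y → ℝ) y‖₊ : ℝ≥0∞) ∂ν).toReal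
        ≤ ε'.toReal := ENNReal.toReal_mono hε'top hsub
      _ = ε₀ / 8 := hε'toReal
  -- gb estimate
  have hgbsmall : |φ gb| ≤ ε₀ / 8 := by
    rw [hφ_apply, hfull]
    refine le_trans (habs gb Uset) ?_
    have hsub : ∫⁻ y in Uset, (‖(gb : Y → ℝ) y‖₊ : ℝ≥0∞) ∂ν ≤ ε' := by
      refine le_trans (lintegral_iUnion_le _ _) ?_
      set G' : ℕ → ℝ≥0∞ := T.indicator δ with hG'
      have : ∀ k, δ (u k) = G' (u k) := by
        intro k
        rw [hG', Set.indicator_of_mem (hu_mem k).2]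
      calc ∑' k, ∫⁻ y in Z (u k), (‖(gb : Y → ℝ) y‖₊ : ℝ≥0∞) ∂ν = ∑' k, G' (u k) := by
            congr 1; ext k; exact this k
        _ ≤ ∑' n, G' n := ENNReal.tsum_comp_le_tsum_of_injective hu_inj G'
        _ ≤ ε' := htail
    calc (∫⁻ y in Uset, (‖(gb : Y → ℝ) y‖₊ : ℝ≥0∞) ∂ν).toReal
        ≤ ε'.toReal := ENNReal.toReal_mono hε'top hsub
      _ = ε₀ / 8 := hε'toReal
  -- split the integral
  have hZsubU : Z m ⊆ Uset := by
    rw [hUset, ← hk₀]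
    exact Set.subset_iUnion (fun k => Z (u k)) k₀
  have hsplit : φ (g m) = (∫ y in Z m, (g m : Y → ℝ) y * s y ∂ν)
      + ∫ y in Uset \ Z m, (g m : Y → ℝ) y * s y ∂ν := by
    rw [hφ_apply, hfull]
    rw [← setIntegral_union Set.disjoint_sdiff_right (hUm.diff (hZm m))
      ((hint (g m)).integrableOn) ((hint (g m)).integrableOn)]
    rw [Set.union_diff_cancel hZsubU]
  -- numeric contradiction
  have h1 : ε₀ - ε₀ / 8 ≤ φ (g m) := by
    rw [hsplit]
    have := neg_le_of_abs_le hoff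
    linarith
  have h2 : φ (g m) < ε₀ / 2 + ε₀ / 8 := by
    have hd : |φ (g m) - φ gb| < ε₀ / 2 := by
      rw [← Real.dist_eq]
      exact hmdist
    have h4 := abs_lt.mp hd
    have h3 := abs_le.mp hgbsmall
    linarith [h4.2, h3.2]
  linarith

/-- The range of a weakly compact operator between `L¹`-spaces of strictly
localizable measure spaces is (a.e.) supported in a σ-finite measurable set `Θ ⊆ Y`. -/
theorem weaklyCompact_range_supported_on_sigmaFinite
    {X Y : Type*} [MeasurableSpace X] [MeasurableSpace Y]
    (μ : Measure X) (ν : Measure Y)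
    (hμ : StrictlyLocalizable μ) (hν : StrictlyLocalizable ν)
    (W : Lp ℝ 1 μ →L[ℝ] Lp ℝ 1 ν) (hW : IsWeaklyCompactOperator W) :
    ∃ Θ : Set Y, MeasurableSet Θ ∧ SigmaFinite (ν.restrict Θ) ∧
      ∀ f : Lp ℝ 1 μ, ∀ᵐ y ∂ν, y ∉ Θ → (W f : Y → ℝ) y = 0 := by
  classical
  obtain ⟨ι, Yp, hdisj, hcover, hfin, _hmeas4, hsum5⟩ := hν
  obtain ⟨C, hC, hWC⟩ := hW
  -- measurability of the support sets
  have hAm : ∀ f : Lp ℝ 1 μ, MeasurableSet {y | (W f : Y → ℝ) y ≠ 0} := by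
    intro f
    have : {y | (W f : Y → ℝ) y ≠ 0} = (W f : Y → ℝ) ⁻¹' ({0}ᶜ) := by
      ext y; simp
    rw [this]
    exact (Lp.stronglyMeasurable (W f)).measurable (measurableSet_singleton (0 : ℝ)).compl
  -- the index sets with definite mass
  set I : ℕ → Set ι := fun n => {i | ∃ f : Lp ℝ 1 μ, ‖f‖ ≤ 1 ∧
    ENNReal.ofReal ((n : ℝ) + 1)⁻¹ ≤ ∫⁻ y in Yp i, ‖(W f : Y → ℝ) y‖₊ ∂ν} with hI
  have hIfin : ∀ n, (I n).Finite := by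
    intro n
    rw [← Set.not_infinite]
    intro hinf
    set e := hinf.natEmbedding with he
    have hsel : ∀ k : ℕ, ∃ f : Lp ℝ 1 μ, ‖f‖ ≤ 1 ∧
        ENNReal.ofReal ((n : ℝ) + 1)⁻¹ ≤ ∫⁻ y in Yp ((e k : ι)), ‖(W f : Y → ℝ) y‖₊ ∂ν :=
      fun k => (e k).2
    choose f hf1 hf2 using hsel
    have hinj : Function.Injective fun k => (e k : ι) := by
      intro k l hkl
      exact e.injective (Subtype.ext hkl)
    refine core_contradiction ν (fun k => Yp ((e k : ι))) (fun k => (hfin _).1)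
      (fun k l hkl => hdisj (hinj.ne hkl)) C hC (fun k => W (f k))
      (fun k => hWC (f k) (by rw [Metric.mem_closedBall, dist_zero_right]; exact hf1 k))
      (ENNReal.ofReal ‖W‖) ENNReal.ofReal_ne_top ?_
      ((n : ℝ) + 1)⁻¹ (by positivity) hf2
    intro m
    have h1 : ∫⁻ y, ‖(W (f m) : Y → ℝ) y‖₊ ∂ν = eLpNorm (W (f m) : Y → ℝ) 1 ν :=
      (eLpNorm_one_eq_lintegral_enorm (f := (W (f m) : Y → ℝ))).symm
    have h2 : eLpNorm (W (f m) : Y → ℝ) 1 ν = ENNReal.ofReal ‖W (f m)‖ := by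
      rw [Lp.norm_def, ENNReal.ofReal_toReal (Lp.eLpNorm_ne_top _)]
    rw [h1, h2]
    refine ENNReal.ofReal_le_ofReal ?_
    calc ‖W (f m)‖ ≤ ‖W‖ * ‖f m‖ := W.le_opNorm (f m)
      _ ≤ ‖W‖ * 1 := mul_le_mul_of_nonneg_left (hf1 m) (norm_nonneg W)
      _ = ‖W‖ := mul_one _
  -- the countable set of relevant indices
  set I0 : Set ι := {i | ∃ f : Lp ℝ 1 μ, ν ({y | (W f : Y → ℝ) y ≠ 0} ∩ Yp i) ≠ 0} with hI0
  have hI0sub : I0 ⊆ ⋃ n, I n := by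
    rintro i ⟨f, hfne⟩
    -- positive mass on Yp i
    have hL : ∫⁻ y in Yp i, ‖(W f : Y → ℝ) y‖₊ ∂ν ≠ 0 := by
      intro h0
      have hmeas : Measurable fun y => (‖(W f : Y → ℝ) y‖₊ : ℝ≥0∞) :=
        (Lp.stronglyMeasurable (W f)).measurable.nnnorm.coe_nnreal_ennreal
      have hae := (lintegral_eq_zero_iff hmeas).mp h0
      have hae' : ∀ᵐ y ∂(ν.restrict (Yp i)), (‖(W f : Y → ℝ) y‖₊ : ℝ≥0∞) = 0 := hae
      have h2 := ae_iff.mp hae'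
      have hsets : {y | ¬ ((‖(W f : Y → ℝ) y‖₊ : ℝ≥0∞) = 0)} = {y | (W f : Y → ℝ) y ≠ 0} := by
        ext y; simp
      rw [hsets] at h2
      rw [Measure.restrict_apply (hAm f)] at h2
      exact hfne h2
    -- normalize f
    have hf0 : f ≠ 0 := by
      rintro rfl
      apply hL
      have : (W 0 : Lp ℝ 1 ν) = 0 := map_zero W
      rw [this]
      have hz : ((0 : Lp ℝ 1 ν) : Y → ℝ) =ᵐ[ν] 0 := Lp.coeFn_zero ℝ 1 ν
      rw [lintegral_eq_zero_iff ((Lp.stronglyMeasurable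
        (0 : Lp ℝ 1 ν)).measurable.nnnorm.coe_nnreal_ennreal)]
      refine ae_restrict_of_ae (hz.mono fun y hy => ?_)
      simp only [Pi.zero_apply] at hy
      show (‖((0 : Lp ℝ 1 ν) : Y → ℝ) y‖₊ : ℝ≥0∞) = (0 : Y → ℝ≥0∞) y
      rw [hy]
      simp
    have hnf : 0 < ‖f‖ := norm_pos_iff.mpr hf0
    set c : ℝ := ‖f‖⁻¹ with hc
    have hc0 : c ≠ 0 := inv_ne_zero hnf.ne'
    set f' : Lp ℝ 1 μ := c • f with hf'
    have hf'1 : ‖f'‖ ≤ 1 := by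
      rw [hf', norm_smul, hc, norm_inv, Real.norm_eq_abs, abs_of_pos hnf,
        inv_mul_cancel₀ hnf.ne']
    have hW' : (W f' : Y → ℝ) =ᵐ[ν] fun y => c * (W f : Y → ℝ) y := by
      have h1 : W f' = c • W f := by rw [hf']; exact W.map_smul c f
      rw [h1]
      filter_upwards [Lp.coeFn_smul c (W f)] with y hy
      simpa using hy
    have hX : ∫⁻ y in Yp i, ‖(W f' : Y → ℝ) y‖₊ ∂ν
        = (‖c‖₊ : ℝ≥0∞) * ∫⁻ y in Yp i, ‖(W f : Y → ℝ) y‖₊ ∂ν := by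
      rw [lintegral_congr_ae (ae_restrict_of_ae (hW'.mono fun y hy => by rw [hy]))]
      simp_rw [nnnorm_mul, ENNReal.coe_mul]
      rw [lintegral_const_mul' _ _ ENNReal.coe_ne_top]
    have hXne : ∫⁻ y in Yp i, ‖(W f' : Y → ℝ) y‖₊ ∂ν ≠ 0 := by
      rw [hX]
      exact mul_ne_zero (by simpa using hc0) hL
    -- choose n
    set Xv : ℝ≥0∞ := ∫⁻ y in Yp i, ‖(W f' : Y → ℝ) y‖₊ ∂ν with hXv
    have : ∃ n : ℕ, ENNReal.ofReal ((n : ℝ) + 1)⁻¹ ≤ Xv := by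
      rcases eq_or_ne Xv ⊤ with hT | hT
      · exact ⟨0, by rw [hT]; exact le_top⟩
      · have hpos : 0 < Xv.toReal := ENNReal.toReal_pos hXne hT
        obtain ⟨n, hn⟩ := exists_nat_gt (Xv.toReal)⁻¹
        refine ⟨n, ?_⟩
        have h1 : ((n : ℝ) + 1)⁻¹ ≤ Xv.toReal := by
          rw [inv_le_comm₀ (by positivity) hpos]
          exact le_trans hn.le (by linarith)
        calc ENNReal.ofReal ((n : ℝ) + 1)⁻¹ ≤ ENNReal.ofReal Xv.toReal :=
              ENNReal.ofReal_le_ofReal h1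
          _ = Xv := ENNReal.ofReal_toReal hT
    obtain ⟨n, hn⟩ := this
    exact Set.mem_iUnion.mpr ⟨n, ⟨f', hf'1, hn⟩⟩
  have hI0c : I0.Countable :=
    Set.Countable.mono hI0sub (Set.countable_iUnion fun n => (hIfin n).countable)
  -- the σ-finite carrier
  set Θ : Set Y := ⋃ i ∈ I0, Yp i with hΘ
  have hΘm : MeasurableSet Θ := MeasurableSet.biUnion hI0c fun i _ => (hfin i).1
  have hSF : SigmaFinite (ν.restrict Θ) := by
    rcases Set.eq_empty_or_nonempty I0 with h0 | hne
    · have hem : Θ = ∅ := by rw [hΘ, h0]; simp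
      rw [hem, Measure.restrict_empty]
      infer_instance
    · obtain ⟨e, he⟩ := Set.Countable.exists_eq_range hI0c hne
      refine ⟨⟨⟨fun k => Yp (e k) ∪ Θᶜ, fun _ => trivial, ?_, ?_⟩⟩⟩
      · intro k
        rw [Measure.restrict_apply ((hfin (e k)).1.union hΘm.compl)]
        refine lt_of_le_of_lt (measure_mono ?_) (hfin (e k)).2
        rintro y ⟨hy1 | hy1, hy2⟩
        · exact hy1
        · exact absurd hy2 hy1
      · rw [Set.iUnion_union_distrib, Set.iUnion_const]
        have h1 : (⋃ k, Yp (e k)) = Θ := by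
          rw [hΘ, he, Set.biUnion_range]
        rw [h1, Set.union_compl_self]
  refine ⟨Θ, hΘm, hSF, ?_⟩
  intro f
  rw [ae_iff]
  have hset : {y | ¬ (y ∉ Θ → (W f : Y → ℝ) y = 0)}
      = {y | (W f : Y → ℝ) y ≠ 0} ∩ Θᶜ := by
    ext y
    simp only [Set.mem_setOf_eq, Set.mem_inter_iff, Set.mem_compl_iff, Classical.not_imp]
    tauto
  rw [hset, hsum5 _ ((hAm f).inter hΘm.compl)]
  convert tsum_zero with i
  by_cases hi : i ∈ I0
  · have : ({y | (W f : Y → ℝ) y ≠ 0} ∩ Θᶜ) ∩ Yp i = ∅ := by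
      rw [Set.eq_empty_iff_forall_notMem]
      rintro y ⟨⟨_, hy2⟩, hy3⟩
      exact hy2 (Set.mem_biUnion hi hy3)
    rw [this, measure_empty]
  · have hforall : ∀ g : Lp ℝ 1 μ, ν ({y | (W g : Y → ℝ) y ≠ 0} ∩ Yp i) = 0 := by
      intro g
      by_contra hne
      exact hi ⟨g, hne⟩
    refine measure_mono_null ?_ (hforall f)
    rintro y ⟨⟨hy1, _⟩, hy3⟩
    exact ⟨hy1, hy3⟩
end
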